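/- arXiv:0907.0371 — 6 statements merged into one kernel-verified Lean document; each statement's English description precedes it below -/
import Mathlib

section
/- The 5×5 integer symmetric matrix with rows (0,1,0,0,0),(1,0,1,0,0),(0,1,0,1,1),(0,0,1,0,1),(0,0,1,1,−1) and the 5×5 integer symmetric matrix with rows (1,1,0,0,0),(1,−1,1,0,0),(0,1,0,1,0),(0,0,1,0,1),(0,0,0,1,1) each have Mahler measure exactly equal to λ₀, the largest real root of Lehmer's polynomial z^10 + z^9 − z^7 − z^6 − z^5 − z^4 − z^3 + z + 1. -/
open Polynomial Matrix

noncomputable section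

/-- Lehmer's polynomial. -/
def lehmer : Polynomial ℤ :=
  X ^ 10 + X ^ 9 - X ^ 7 - X ^ 6 - X ^ 5 - X ^ 4 - X ^ 3 + X + 1

/-- Spectral radius of an integer symmetric matrix: the maximum of the absolute
values of the (real) roots of its characteristic polynomial. -/
def specRad {d : ℕ} (A : Matrix (Fin d) (Fin d) ℤ) : ℝ :=
  sSup {r : ℝ | ∃ x ∈ (A.charpoly.map (Int.castRingHom ℝ)).roots, |x| = r}

/-- The associated reciprocal polynomial `z^d * p(z + 1/z)` of a polynomial `p`
of degree (at most) `d`. -/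
def recipPoly (d : ℕ) (p : Polynomial ℤ) : Polynomial ℤ :=
  ∑ i ∈ Finset.range (d + 1), Polynomial.C (p.coeff i) * X ^ (d - i) * (X ^ 2 + 1) ^ i

/-- Mahler measure of an integer symmetric matrix: the Mahler measure of its
associated reciprocal polynomial. -/
def mahlerMeasure {d : ℕ} (A : Matrix (Fin d) (Fin d) ℤ) : ℝ :=
  ((((recipPoly d A.charpoly).map (Int.castRingHom ℂ)).roots).map
    (fun z => max 1 ‖z‖)).prod

/-- Equivalence of integer symmetric matrices: `B = ε • (Pᵀ * A * P)` for a sign `ε`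
and a signed permutation matrix `P`. -/
def MEquiv {m n : Type*} [Fintype m] [DecidableEq m] [Fintype n] [DecidableEq n]
    (A : Matrix m m ℤ) (B : Matrix n n ℤ) : Prop :=
  ∃ (ε : ℤ) (P : Matrix m n ℤ), (ε = 1 ∨ ε = -1) ∧ Pᵀ * P = 1 ∧ P * Pᵀ = 1 ∧
    B = ε • (Pᵀ * A * P)

/-- A matrix is indecomposable when its underlying graph is connected. -/
def Indecomposable {m : Type*} [Fintype m] (A : Matrix m m ℤ) : Prop :=
  (SimpleGraph.fromRel (fun i j => A i j ≠ 0)).Connected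

/-- The principal submatrix obtained by deleting row `i` and column `i`. -/
def deleteRC {d : ℕ} (A : Matrix (Fin d) (Fin d) ℤ) (i : Fin d) :
    Matrix (Fin (d - 1)) (Fin (d - 1)) ℤ :=
  A.submatrix
    (fun j => Fin.cast (Nat.succ_pred_eq_of_pos i.pos)
      ((Fin.cast (Nat.succ_pred_eq_of_pos i.pos).symm i).succAbove j))
    (fun j => Fin.cast (Nat.succ_pred_eq_of_pos i.pos)
      ((Fin.cast (Nat.succ_pred_eq_of_pos i.pos).symm i).succAbove j))

/-- Minimal noncyclotomic matrices. -/
def MinimalNoncyclotomic {d : ℕ} (A : Matrix (Fin d) (Fin d) ℤ) : Prop :=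
  2 < specRad A ∧ ∀ i : Fin d, specRad (deleteRC A i) ≤ 2


/-- The adjacency matrix of the starlike tree `T_{1,2,6}`: vertex `0` is the central
vertex, with arms `1`; `2-3`; `4-5-6-7-8-9`. -/
def T126 : Matrix (Fin 10) (Fin 10) ℤ :=
  Matrix.of fun i j =>
    if (i, j) ∈ ([(0,1),(0,2),(2,3),(0,4),(4,5),(5,6),(6,7),(7,8),(8,9)] :
          List (Fin 10 × Fin 10)) ∨
       (j, i) ∈ ([(0,1),(0,2),(2,3),(0,4),(4,5),(5,6),(6,7),(7,8),(8,9)] :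
          List (Fin 10 × Fin 10))
    then 1 else 0

def M5u : Matrix (Fin 5) (Fin 5) ℤ :=
  !![0,1,0,0,0; 1,0,1,0,0; 0,1,0,1,1; 0,0,1,0,1; 0,0,1,1,-1]

def M5N : Matrix (Fin 5) (Fin 5) ℤ :=
  !![1,1,0,0,0; 1,-1,1,0,0; 0,1,0,1,0; 0,0,1,0,1; 0,0,0,1,1]

/-- The induced submatrix (induced subgraph) on a finite set of indices. -/
def induce {V : Type*} (A : Matrix V V ℤ) (S : Finset V) :
    Matrix {x // x ∈ S} {x // x ∈ S} ℤ :=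
  A.submatrix Subtype.val Subtype.val

/-- The adjacency matrix of the toral tesselation `T_{2k}` (for `k ≥ 3`), with vertex set
`(ℤ/k) × {1,2}` realised as `Fin k × Fin 2`: column `i` is joined to column `i+1 (mod k)`,
with edge signs `+1` from `(i,0)` and `-1` from `(i,1)`. -/
def Tmat (k : ℕ) : Matrix (Fin k × Fin 2) (Fin k × Fin 2) ℤ :=
  Matrix.of fun u v =>
    (if ((u.1 : ℕ) + 1) % k = (v.1 : ℕ) then (if u.2 = 0 then 1 else -1) else 0) +
    (if ((v.1 : ℕ) + 1) % k = (u.1 : ℕ) then (if v.2 = 0 then 1 else -1) else 0)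

/-- The adjacency matrix of the cylindrical tesselation `C_{2k}^{±±}` (for `k ≥ 2`), with
vertex set `Fin k × Fin 2`; the last column carries charges `ch` and a vertical edge of
sign `es`.  `C_{2k}^{++} = Cmat k 1 (-1)` and `C_{2k}^{+-} = Cmat k (-1) 1`. -/
def Cmat (k : ℕ) (ch es : ℤ) : Matrix (Fin k × Fin 2) (Fin k × Fin 2) ℤ :=
  Matrix.of fun u v =>
    if u.1 = v.1 then
      (if (u.1 : ℕ) = 0 then 1
       else if (u.1 : ℕ) = k - 1 then (if u.2 = v.2 then ch else es)
       else 0)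
    else if (u.1 : ℕ) + 1 = (v.1 : ℕ) then (if u.2 = 0 then 1 else -1)
    else if (v.1 : ℕ) + 1 = (u.1 : ℕ) then (if v.2 = 0 then 1 else -1)
    else 0

/-- The underlying simple graph of a charged signed graph (adjacency matrix). -/
def graphOf {V : Type*} (A : Matrix V V ℤ) : SimpleGraph V :=
  SimpleGraph.fromRel (fun i j => A i j ≠ 0)

/-- `G` has a chordless path or chordless cycle with `n` vertices. -/
def HasChordless {V : Type*} (G : SimpleGraph V) (n : ℕ) : Prop :=
  (∃ f : Fin n → V, Function.Injective f ∧
      ∀ i j : Fin n, G.Adj (f i) (f j) ↔ ((i : ℕ) + 1 = (j : ℕ) ∨ (j : ℕ) + 1 = (i : ℕ))) ∨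
  (3 ≤ n ∧ ∃ f : Fin n → V, Function.Injective f ∧
      ∀ i j : Fin n, G.Adj (f i) (f j) ↔
        (((i : ℕ) + 1) % n = (j : ℕ) ∨ ((j : ℕ) + 1) % n = (i : ℕ)))

/-- The path rank of `G`: the maximal number of vertices of a chordless path or
chordless cycle. -/
def pathRank {V : Type*} [Fintype V] (G : SimpleGraph V) : ℕ :=
  sSup {n | HasChordless G n}

/-- A profile of a charged signed graph `A`, given by a surjection `c` onto the `k ≥ 3`
columns (`cyc` records whether the profile is cycling): each column consists of vertices
with equal charge, and two distinct vertices are adjacent iff they lie in consecutive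
columns or are charged vertices in a common column. -/
def IsProfile {V : Type*} (A : Matrix V V ℤ) (k : ℕ) (cyc : Bool) (c : V → Fin k) : Prop :=
  3 ≤ k ∧ Function.Surjective c ∧
  (∀ u v : V, c u = c v → A u u = A v v) ∧
  (∀ u v : V, u ≠ v →
    (A u v ≠ 0 ↔
      ((if cyc then (((c u : ℕ) + 1) % k = (c v : ℕ) ∨ ((c v : ℕ) + 1) % k = (c u : ℕ))
        else ((c u : ℕ) + 1 = (c v : ℕ) ∨ (c v : ℕ) + 1 = (c u : ℕ)))
       ∨ (c u = c v ∧ A u u ≠ 0))))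


namespace Statement6Aux

open Polynomial

lemma quad_roots (l : ℝ) : ∃ u v : ℂ, u + v = (l : ℂ) ∧ u * v = 1 := by
  have hdeg : (X ^ 2 - C (l : ℂ) * X + 1 : ℂ[X]).natDegree = 2 := by
    compute_degree!
  have hne0 : (X ^ 2 - C (l : ℂ) * X + 1 : ℂ[X]) ≠ 0 := by
    intro h; rw [h] at hdeg; simp at hdeg
  obtain ⟨w, hw⟩ := Complex.exists_root (f := X ^ 2 - C (l : ℂ) * X + 1) (by
    rw [degree_eq_natDegree hne0, hdeg]; norm_num)
  rw [IsRoot.def] at hw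
  simp only [eval_add, eval_sub, eval_mul, eval_pow, eval_X, eval_C, eval_one] at hw
  exact ⟨w, (l : ℂ) - w, by ring, by linear_combination -hw⟩

lemma key (lam0 : ℝ) (h1 : 1 < lam0) (j0 : Fin 5) (lam : Fin 5 → ℝ) (L : Polynomial ℤ)
    (hfac : L.map (Int.castRingHom ℂ) =
      ∏ i : Fin 5, (X ^ 2 - C ((lam i : ℂ)) * X + 1))
    (hsmall : ∀ i : Fin 5, i ≠ j0 → (lam i) ^ 2 < 4)
    (hmem : ∃ s : ℂ, ‖s‖ = lam0 ∧ (L.map (Int.castRingHom ℂ)).eval s = 0) :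
    (((L.map (Int.castRingHom ℂ)).roots).map (fun z => max 1 ‖z‖)).prod = lam0 := by
  choose u v hsum hprod using fun i => quad_roots (lam i)
  -- factor each quadratic
  have hquad : ∀ i : Fin 5, (X ^ 2 - C ((lam i : ℂ)) * X + 1 : ℂ[X]) =
      (X - C (u i)) * (X - C (v i)) := by
    intro i
    have h1' : C (u i) + C (v i) = C ((lam i : ℂ)) := by rw [← C_add, hsum]
    have h2' : C (u i) * C (v i) = 1 := by rw [← C_mul, hprod, C_1]
    linear_combination (X : ℂ[X]) * h1' - h2'
  set m : Multiset ℂ := Finset.univ.val.map u + Finset.univ.val.map v with hm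
  have hfac2 : L.map (Int.castRingHom ℂ) = (m.map fun a => X - C a).prod := by
    rw [hfac, hm, Multiset.map_add, Multiset.prod_add, Multiset.map_map, Multiset.map_map]
    simp only [Finset.prod_map_val, Function.comp]
    rw [← Finset.prod_mul_distrib]
    exact Finset.prod_congr rfl fun i _ => hquad i
  have hLne : L.map (Int.castRingHom ℂ) ≠ 0 := by
    rw [hfac2]
    apply Multiset.prod_ne_zero
    intro h0
    obtain ⟨a, _, ha⟩ := Multiset.mem_map.mp h0
    exact X_sub_C_ne_zero a ha
  have hroots : (L.map (Int.castRingHom ℂ)).roots = m := by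
    rw [hfac2, Polynomial.roots_multiset_prod_X_sub_C]
  -- abs facts
  have huv_ne : ∀ i : Fin 5, u i ≠ 0 := by
    intro i h0
    have := hprod i; rw [h0] at this; simp at this
  have habs_small : ∀ i : Fin 5, i ≠ j0 → ‖u i‖ = 1 ∧ ‖v i‖ = 1 := by
    intro i hi
    have hv : v i = (lam i : ℂ) - u i := by linear_combination hsum i
    -- conj (u i) is a root of the quadratic
    have hroot : (u i)^2 - (lam i : ℂ) * u i + 1 = 0 := by
      linear_combination (u i) * (hsum i) - hprod i
    have hconj : ((starRingEnd ℂ) (u i))^2 - (lam i : ℂ) * (starRingEnd ℂ) (u i) + 1 = 0 := by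
      have := congrArg (starRingEnd ℂ) hroot
      simpa [_root_.map_add, _root_.map_sub, _root_.map_mul, _root_.map_pow, Complex.conj_ofReal] using this
    have hcases : (starRingEnd ℂ) (u i) = u i ∨ (starRingEnd ℂ) (u i) = v i := by
      have : ((starRingEnd ℂ) (u i) - u i) * ((starRingEnd ℂ) (u i) - v i) = 0 := by
        linear_combination hconj - ((starRingEnd ℂ) (u i)) * hsum i + hprod i
      rcases mul_eq_zero.mp this with h | h
      · left; exact sub_eq_zero.mp h
      · right; exact sub_eq_zero.mp h
    rcases hcases with h | h
    · -- u i is real; then v i real too; contradiction with lam i ^ 2 < 4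
      exfalso
      obtain ⟨a, ha⟩ := Complex.conj_eq_iff_real.mp h
      have hvr : v i = ((lam i - a : ℝ) : ℂ) := by
        rw [hv, ha]; push_cast; ring
      have hab : a * (lam i - a) = 1 := by
        have h2 := hprod i
        rw [hvr, ha] at h2
        exact_mod_cast h2
      have := hsmall i hi
      nlinarith [sq_nonneg (a - (lam i - a)), sq_nonneg (a + (lam i - a))]
    · -- conj u = v : |u| = 1
      have h1' : ‖u i‖ = 1 := by
        have hn : (Complex.normSq (u i) : ℂ) = 1 := by
          rw [← Complex.mul_conj, h]; exact hprod i
        have hn' : Complex.normSq (u i) = 1 := by exact_mod_cast hn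
        rw [Complex.norm_def, hn', Real.sqrt_one]
      refine ⟨h1', ?_⟩
      rw [← h]
      simp [h1']
  -- the root s matches u j0 or v j0
  obtain ⟨s, hs_abs, hs_root⟩ := hmem
  have hs_mem : s ∈ m := by
    rw [← hroots, Polynomial.mem_roots hLne]
    exact hs_root
  have habs_uv4 : ‖u j0‖ = lam0 ∨ ‖v j0‖ = lam0 := by
    rw [hm] at hs_mem
    rcases Multiset.mem_add.mp hs_mem with h | h <;>
      obtain ⟨i, _, rfl⟩ := Multiset.mem_map.mp h
    · by_cases hi : i = j0
      · left; rw [← hi]; exact hs_abs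
      · exact absurd hs_abs (by rw [(habs_small i hi).1]; linarith)
    · by_cases hi : i = j0
      · right; rw [← hi]; exact hs_abs
      · exact absurd hs_abs (by rw [(habs_small i hi).2]; linarith)
  have habs_mul4 : ‖u j0‖ * ‖v j0‖ = 1 := by
    rw [← norm_mul, hprod]; simp
  -- compute the product
  rw [hroots, hm]
  rw [Multiset.map_add, Multiset.prod_add, Multiset.map_map, Multiset.map_map]
  simp only [Finset.prod_map_val, Function.comp]
  rw [← Finset.prod_mul_distrib]
  rw [Finset.prod_eq_single_of_mem j0 (Finset.mem_univ _)]
  · have hlam0ne : lam0 ≠ 0 := by linarith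
    rcases habs_uv4 with h | h
    · have hv4 : ‖v j0‖ = lam0⁻¹ := by
        field_simp
        rw [← h, mul_comm]; exact habs_mul4
      rw [h, hv4, max_eq_right (le_of_lt h1),
        max_eq_left (by rw [inv_le_one_iff₀]; right; linarith)]
      simp
    · have hu4 : ‖u j0‖ = lam0⁻¹ := by
        field_simp
        rw [← h]; linarith [habs_mul4]
      rw [h, hu4, max_eq_right (le_of_lt h1),
        max_eq_left (by rw [inv_le_one_iff₀]; right; linarith)]
      simp
  · intro i _ hi
    rw [(habs_small i hi).1, (habs_small i hi).2]
    simp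

lemma quintic_factor (b4 b3 b2 b1 b0 : ℝ) (lam : Fin 5 → ℝ)
    (hinj : Function.Injective lam)
    (hroot : ∀ i, (lam i)^5 + b4*(lam i)^4 + b3*(lam i)^3 + b2*(lam i)^2
      + b1*(lam i) + b0 = 0) :
    (X^5 + C b4*X^4 + C b3*X^3 + C b2*X^2 + C b1*X + C b0 : ℝ[X])
      = ∏ i : Fin 5, (X - C (lam i)) := by
  set P : ℝ[X] := X^5 + C b4*X^4 + C b3*X^3 + C b2*X^2 + C b1*X + C b0 with hP
  have hmon : P.Monic := by
    have : P = X^5 + (C b4*X^4 + C b3*X^3 + C b2*X^2 + C b1*X + C b0) := by ring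
    rw [this]
    have h4 : (C b4*X^4 + C b3*X^3 + C b2*X^2 + C b1*X + C b0 : ℝ[X]).degree ≤ 4 := by
      compute_degree
    exact monic_X_pow_add (n := 5) (lt_of_le_of_lt h4 (by norm_num))
  have hdeg : P.natDegree = 5 := by rw [hP]; compute_degree!
  have heval : ∀ x : ℝ, P.eval x = x^5 + b4*x^4 + b3*x^3 + b2*x^2 + b1*x + b0 := by
    intro x; simp [hP]
  set m0 : Multiset ℝ := Finset.univ.val.map lam with hm0
  have hcard : Multiset.card m0 = 5 := by simp [hm0]
  have hsub : m0 ≤ P.roots := by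
    rw [Multiset.le_iff_subset (Multiset.Nodup.map hinj Finset.univ.nodup)]
    intro a ha
    obtain ⟨i, _, rfl⟩ := Multiset.mem_map.mp ha
    rw [mem_roots hmon.ne_zero, IsRoot.def, heval]
    exact hroot i
  have hEq : P.roots = m0 :=
    (Multiset.eq_of_le_of_card_le hsub (by rw [hcard]; exact hdeg ▸ P.card_roots')).symm
  have := prod_multiset_X_sub_C_of_monic_of_roots_card_eq hmon (by rw [hEq, hcard, hdeg])
  rw [hEq, hm0, Multiset.map_map] at this
  rw [← this]
  rw [Finset.prod_eq_multiset_prod]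
  rfl

lemma quintic_eval (b4 b3 b2 b1 b0 : ℝ) (lam : Fin 5 → ℝ)
    (hinj : Function.Injective lam)
    (hroot : ∀ i, (lam i)^5 + b4*(lam i)^4 + b3*(lam i)^3 + b2*(lam i)^2
      + b1*(lam i) + b0 = 0) :
    ∀ w : ℂ, w^5 + b4*w^4 + b3*w^3 + b2*w^2 + b1*w + b0
      = ∏ i : Fin 5, (w - (lam i : ℂ)) := by
  intro w
  have h := congrArg (aeval w) (quintic_factor b4 b3 b2 b1 b0 lam hinj hroot)
  simpa [map_prod, Complex.coe_algebraMap] using h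

lemma ivt_root {f : ℝ → ℝ} (hc : Continuous f) {a b : ℝ} (hab : a ≤ b)
    (h1 : f a ≤ 0) (h2 : 0 ≤ f b) : ∃ r, r ∈ Set.Icc a b ∧ f r = 0 := by
  have := intermediate_value_Icc hab hc.continuousOn (Set.mem_Icc.mpr ⟨h1, h2⟩)
  obtain ⟨r, hr, hr0⟩ := this
  exact ⟨r, hr, hr0⟩

lemma ivt_root' {f : ℝ → ℝ} (hc : Continuous f) {a b : ℝ} (hab : a ≤ b)
    (h1 : 0 ≤ f a) (h2 : f b ≤ 0) : ∃ r, r ∈ Set.Icc a b ∧ f r = 0 := by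
  have := intermediate_value_Icc' hab hc.continuousOn (Set.mem_Icc.mpr ⟨h2, h1⟩)
  obtain ⟨r, hr, hr0⟩ := this
  exact ⟨r, hr, hr0⟩

lemma exists_lam_u : ∃ lam : Fin 5 → ℝ, Function.Injective lam ∧
    (∀ i, (lam i)^5 + (lam i)^4 - 5*(lam i)^3 - 5*(lam i)^2 + 4*(lam i) + 3 = 0) ∧
    (∀ i, i ≠ 4 → (lam i)^2 < 4) := by
  set g : ℝ → ℝ := fun x => x^5 + x^4 - 5*x^3 - 5*x^2 + 4*x + 3 with hg
  have hc : Continuous g := by fun_prop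
  obtain ⟨r0, hr0m, hr0⟩ := ivt_root hc (by norm_num : (-1.9:ℝ) ≤ -1.8)
    (by norm_num [hg]) (by norm_num [hg])
  obtain ⟨r1, hr1m, hr1⟩ := ivt_root' hc (by norm_num : (-1.5:ℝ) ≤ -1.4)
    (by norm_num [hg]) (by norm_num [hg])
  obtain ⟨r2, hr2m, hr2⟩ := ivt_root hc (by norm_num : (-0.6:ℝ) ≤ -0.5)
    (by norm_num [hg]) (by norm_num [hg])
  obtain ⟨r3, hr3m, hr3⟩ := ivt_root' hc (by norm_num : (0.9:ℝ) ≤ 1)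
    (by norm_num [hg]) (by norm_num [hg])
  obtain ⟨r4, hr4m, hr4⟩ := ivt_root hc (by norm_num : (2:ℝ) ≤ 2.1)
    (by norm_num [hg]) (by norm_num [hg])
  obtain ⟨hr0a, hr0b⟩ := hr0m; obtain ⟨hr1a, hr1b⟩ := hr1m
  obtain ⟨hr2a, hr2b⟩ := hr2m; obtain ⟨hr3a, hr3b⟩ := hr3m
  obtain ⟨hr4a, hr4b⟩ := hr4m
  rw [hg] at hr0 hr1 hr2 hr3 hr4
  simp only [] at hr0 hr1 hr2 hr3 hr4
  refine ⟨![r0, r1, r2, r3, r4], ?_, ?_, ?_⟩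
  · have hsm : StrictMono ![r0, r1, r2, r3, r4] := by
      rw [Fin.strictMono_iff_lt_succ]
      intro i
      fin_cases i <;> simp [Fin.castSucc, Fin.castAdd, Fin.castLE, Fin.succ] <;> linarith
    exact hsm.injective
  · intro i
    fin_cases i <;> simp <;>
      first
        | linarith [hr0] | linarith [hr1] | linarith [hr2] | linarith [hr3] | linarith [hr4]
  · intro i hi
    fin_cases i <;> simp <;> first | nlinarith | (exact absurd rfl hi)

lemma exists_lam_N : ∃ lam : Fin 5 → ℝ, Function.Injective lam ∧
    (∀ i, (lam i)^5 - (lam i)^4 - 5*(lam i)^3 + 5*(lam i)^2 + 4*(lam i) - 3 = 0) ∧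
    (∀ i, i ≠ 0 → (lam i)^2 < 4) := by
  set g : ℝ → ℝ := fun x => x^5 - x^4 - 5*x^3 + 5*x^2 + 4*x - 3 with hg
  have hc : Continuous g := by fun_prop
  obtain ⟨r0, hr0m, hr0⟩ := ivt_root hc (by norm_num : (-2.1:ℝ) ≤ -2)
    (by norm_num [hg]) (by norm_num [hg])
  obtain ⟨r1, hr1m, hr1⟩ := ivt_root' hc (by norm_num : (-1:ℝ) ≤ -0.9)
    (by norm_num [hg]) (by norm_num [hg])
  obtain ⟨r2, hr2m, hr2⟩ := ivt_root hc (by norm_num : (0.5:ℝ) ≤ 0.6)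
    (by norm_num [hg]) (by norm_num [hg])
  obtain ⟨r3, hr3m, hr3⟩ := ivt_root' hc (by norm_num : (1.4:ℝ) ≤ 1.5)
    (by norm_num [hg]) (by norm_num [hg])
  obtain ⟨r4, hr4m, hr4⟩ := ivt_root hc (by norm_num : (1.8:ℝ) ≤ 1.9)
    (by norm_num [hg]) (by norm_num [hg])
  obtain ⟨hr0a, hr0b⟩ := hr0m; obtain ⟨hr1a, hr1b⟩ := hr1m
  obtain ⟨hr2a, hr2b⟩ := hr2m; obtain ⟨hr3a, hr3b⟩ := hr3m
  obtain ⟨hr4a, hr4b⟩ := hr4m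
  rw [hg] at hr0 hr1 hr2 hr3 hr4
  simp only [] at hr0 hr1 hr2 hr3 hr4
  refine ⟨![r0, r1, r2, r3, r4], ?_, ?_, ?_⟩
  · have hsm : StrictMono ![r0, r1, r2, r3, r4] := by
      rw [Fin.strictMono_iff_lt_succ]
      intro i
      fin_cases i <;> simp [Fin.castSucc, Fin.castAdd, Fin.castLE, Fin.succ] <;> linarith
    exact hsm.injective
  · intro i
    fin_cases i <;> simp <;>
      first
        | linarith [hr0] | linarith [hr1] | linarith [hr2] | linarith [hr3] | linarith [hr4]
  · intro i hi
    fin_cases i <;> simp <;> first | nlinarith | (exact absurd rfl hi)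

end Statement6Aux

namespace Statement6Aux

open Polynomial

lemma charpoly_M5u : M5u.charpoly = X^5 + X^4 - 5*X^3 - 5*X^2 + 4*X + 3 := by
  have h : charmatrix M5u =
    !![X, -1, 0, 0, 0; -1, X, -1, 0, 0; 0, -1, X, -1, -1;
       0, 0, -1, X, -1; 0, 0, -1, -1, X+1] := by
    ext i j : 2
    fin_cases i <;> fin_cases j <;>
      norm_num [charmatrix_apply, M5u, Matrix.vecHead, Matrix.vecTail,
        Matrix.diagonal_apply, Fin.ext_iff]
  rw [Matrix.charpoly, h]
  simp [Matrix.det_succ_row_zero, Fin.sum_univ_succ, Matrix.submatrix_apply, Fin.succAbove,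
    Fin.succ_ne_zero]
  ring

lemma charpoly_M5N : M5N.charpoly = X^5 - X^4 - 5*X^3 + 5*X^2 + 4*X - 3 := by
  have h : charmatrix M5N =
    !![X-1, -1, 0, 0, 0; -1, X+1, -1, 0, 0; 0, -1, X, -1, 0;
       0, 0, -1, X, -1; 0, 0, 0, -1, X-1] := by
    ext i j : 2
    fin_cases i <;> fin_cases j <;>
      norm_num [charmatrix_apply, M5N, Matrix.vecHead, Matrix.vecTail,
        Matrix.diagonal_apply, Fin.ext_iff]
  rw [Matrix.charpoly, h]
  simp [Matrix.det_succ_row_zero, Fin.sum_univ_succ, Matrix.submatrix_apply, Fin.succAbove,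
    Fin.succ_ne_zero]
  ring

lemma recip_M5u : recipPoly 5 (X^5 + X^4 - 5*X^3 - 5*X^2 + 4*X + 3) = lehmer := by
  set q : ℤ[X] := X^5 + X^4 - 5*X^3 - 5*X^2 + 4*X + 3 with hq
  have h0 : q.coeff 0 = 3 := by norm_num [hq, coeff_one, Polynomial.coeff_X]
  have h1 : q.coeff 1 = 4 := by norm_num [hq, coeff_one, Polynomial.coeff_X]
  have h2 : q.coeff 2 = -5 := by norm_num [hq, coeff_one, Polynomial.coeff_X]
  have h3 : q.coeff 3 = -5 := by norm_num [hq, coeff_one, Polynomial.coeff_X]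
  have h4 : q.coeff 4 = 1 := by norm_num [hq, coeff_one, Polynomial.coeff_X]
  have h5 : q.coeff 5 = 1 := by norm_num [hq, coeff_one, Polynomial.coeff_X]
  rw [recipPoly]
  rw [Finset.sum_range_succ, Finset.sum_range_succ, Finset.sum_range_succ,
    Finset.sum_range_succ, Finset.sum_range_succ, Finset.sum_range_succ,
    h0, h1, h2, h3, h4, h5]
  norm_num [lehmer]
  ring

lemma recip_M5N : recipPoly 5 (X^5 - X^4 - 5*X^3 + 5*X^2 + 4*X - 3) =
    X^10 - X^9 + X^7 - X^6 + X^5 - X^4 + X^3 - X + 1 := by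
  set q : ℤ[X] := X^5 - X^4 - 5*X^3 + 5*X^2 + 4*X - 3 with hq
  have h0 : q.coeff 0 = -3 := by norm_num [hq, coeff_one, Polynomial.coeff_X]
  have h1 : q.coeff 1 = 4 := by norm_num [hq, coeff_one, Polynomial.coeff_X]
  have h2 : q.coeff 2 = 5 := by norm_num [hq, coeff_one, Polynomial.coeff_X]
  have h3 : q.coeff 3 = -5 := by norm_num [hq, coeff_one, Polynomial.coeff_X]
  have h4 : q.coeff 4 = -1 := by norm_num [hq, coeff_one, Polynomial.coeff_X]
  have h5 : q.coeff 5 = 1 := by norm_num [hq, coeff_one, Polynomial.coeff_X]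
  rw [recipPoly]
  rw [Finset.sum_range_succ, Finset.sum_range_succ, Finset.sum_range_succ,
    Finset.sum_range_succ, Finset.sum_range_succ, Finset.sum_range_succ,
    h0, h1, h2, h3, h4, h5]
  norm_num
  ring

lemma lehmer_fac (lam : Fin 5 → ℝ) (hinj : Function.Injective lam)
    (hroot : ∀ i, (lam i)^5 + (lam i)^4 - 5*(lam i)^3 - 5*(lam i)^2 + 4*(lam i) + 3 = 0) :
    lehmer.map (Int.castRingHom ℂ) = ∏ i : Fin 5, (X^2 - C ((lam i : ℂ)) * X + 1) := by
  have hq := quintic_eval 1 (-5) (-5) 4 3 lam hinj (by intro i; linarith [hroot i])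
  apply Polynomial.funext
  intro z
  have hR : (∏ i : Fin 5, (X^2 - C ((lam i : ℂ)) * X + 1)).eval z
      = ∏ i : Fin 5, (z^2 - (lam i : ℂ) * z + 1) := by
    simp [eval_prod]
  have hL : (lehmer.map (Int.castRingHom ℂ)).eval z
      = z^10 + z^9 - z^7 - z^6 - z^5 - z^4 - z^3 + z + 1 := by
    simp [lehmer, Polynomial.eval_map]
  rw [hR, hL]
  by_cases hz : z = 0
  · subst hz; simp
  · set w : ℂ := z + z⁻¹ with hwdef
    have hw1 : z * w = z^2 + 1 := by
      rw [hwdef]; field_simp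
    have key2 : ∀ i : Fin 5, z^2 - (lam i : ℂ) * z + 1 = z * (w - (lam i : ℂ)) := by
      intro i; rw [mul_sub, hw1]; ring
    push_cast at hq
    calc z ^ 10 + z ^ 9 - z ^ 7 - z ^ 6 - z ^ 5 - z ^ 4 - z ^ 3 + z + 1
        = (z^2+1)^5 + z*(z^2+1)^4 - 5*z^2*(z^2+1)^3 - 5*z^3*(z^2+1)^2
          + 4*z^4*(z^2+1) + 3*z^5 := by ring
      _ = z^5 * (w^5 + w^4 - 5*w^3 - 5*w^2 + 4*w + 3) := by rw [← hw1]; ring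
      _ = z^5 * ∏ i : Fin 5, (w - (lam i : ℂ)) := by rw [← hq w]; ring
      _ = ∏ i : Fin 5, (z^2 - (lam i : ℂ) * z + 1) := by
          rw [Finset.prod_congr rfl (fun i _ => key2 i), Finset.prod_mul_distrib,
            Finset.prod_const, Finset.card_univ, Fintype.card_fin]

lemma lehmerN_fac (lam : Fin 5 → ℝ) (hinj : Function.Injective lam)
    (hroot : ∀ i, (lam i)^5 - (lam i)^4 - 5*(lam i)^3 + 5*(lam i)^2 + 4*(lam i) - 3 = 0) :
    (X^10 - X^9 + X^7 - X^6 + X^5 - X^4 + X^3 - X + 1 : ℤ[X]).map (Int.castRingHom ℂ)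
      = ∏ i : Fin 5, (X^2 - C ((lam i : ℂ)) * X + 1) := by
  have hq := quintic_eval (-1) (-5) 5 4 (-3) lam hinj (by intro i; linarith [hroot i])
  apply Polynomial.funext
  intro z
  have hR : (∏ i : Fin 5, (X^2 - C ((lam i : ℂ)) * X + 1)).eval z
      = ∏ i : Fin 5, (z^2 - (lam i : ℂ) * z + 1) := by
    simp [eval_prod]
  have hL : (((X^10 - X^9 + X^7 - X^6 + X^5 - X^4 + X^3 - X + 1 : ℤ[X])).map
      (Int.castRingHom ℂ)).eval z
      = z^10 - z^9 + z^7 - z^6 + z^5 - z^4 + z^3 - z + 1 := by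
    simp [Polynomial.eval_map]
  rw [hR, hL]
  by_cases hz : z = 0
  · subst hz; simp
  · set w : ℂ := z + z⁻¹ with hwdef
    have hw1 : z * w = z^2 + 1 := by
      rw [hwdef]; field_simp
    have key2 : ∀ i : Fin 5, z^2 - (lam i : ℂ) * z + 1 = z * (w - (lam i : ℂ)) := by
      intro i; rw [mul_sub, hw1]; ring
    push_cast at hq
    calc z ^ 10 - z ^ 9 + z ^ 7 - z ^ 6 + z ^ 5 - z ^ 4 + z ^ 3 - z + 1
        = (z^2+1)^5 - z*(z^2+1)^4 - 5*z^2*(z^2+1)^3 + 5*z^3*(z^2+1)^2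
          + 4*z^4*(z^2+1) - 3*z^5 := by ring
      _ = z^5 * (w^5 - w^4 - 5*w^3 + 5*w^2 + 4*w - 3) := by rw [← hw1]; ring
      _ = z^5 * ∏ i : Fin 5, (w - (lam i : ℂ)) := by rw [← hq w]; ring
      _ = ∏ i : Fin 5, (z^2 - (lam i : ℂ) * z + 1) := by
          rw [Finset.prod_congr rfl (fun i _ => key2 i), Finset.prod_mul_distrib,
            Finset.prod_const, Finset.card_univ, Fintype.card_fin]

end Statement6Aux

/-- the charged signed graphs `5u` and `5N` have Mahler measure exactly
`λ₀`, the largest real root of Lehmer's polynomial. -/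
theorem statement6 (lam0 : ℝ)
    (hlam0 : IsGreatest {x : ℝ | (Polynomial.aeval x) lehmer = 0} lam0) :
    mahlerMeasure M5u = lam0 ∧ mahlerMeasure M5N = lam0 := by
  open Statement6Aux in
  have hlam0root : lam0^10 + lam0^9 - lam0^7 - lam0^6 - lam0^5 - lam0^4 - lam0^3
      + lam0 + 1 = 0 := by
    have := hlam0.1
    simp only [Set.mem_setOf_eq, lehmer, map_add, map_sub, map_pow, _root_.map_one,
      Polynomial.aeval_X] at this
    linarith [this]
  have h1 : 1 < lam0 := by
    obtain ⟨r, hrm, hr0⟩ := Statement6Aux.ivt_root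
      (f := fun x : ℝ => x^10 + x^9 - x^7 - x^6 - x^5 - x^4 - x^3 + x + 1)
      (by fun_prop) (by norm_num : (1.1:ℝ) ≤ 1.3) (by norm_num) (by norm_num)
    have hrle : r ≤ lam0 := by
      apply hlam0.2
      simp only [Set.mem_setOf_eq, lehmer, map_add, map_sub, map_pow, _root_.map_one,
        Polynomial.aeval_X]
      linarith [hr0]
    have := hrm.1
    linarith
  constructor
  · obtain ⟨lam, hinj, hroot, hsmall⟩ := Statement6Aux.exists_lam_u
    rw [_root_.mahlerMeasure, charpoly_M5u, recip_M5u]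
    apply Statement6Aux.key lam0 h1 4 lam lehmer (lehmer_fac lam hinj hroot) hsmall
    refine ⟨(lam0 : ℂ), ?_, ?_⟩
    · simp [Complex.norm_real, Real.norm_eq_abs, abs_of_pos (by linarith : (0:ℝ) < lam0)]
    · rw [lehmer_fac lam hinj hroot]
      have : ((lam0:ℂ)^10 + (lam0:ℂ)^9 - (lam0:ℂ)^7 - (lam0:ℂ)^6 - (lam0:ℂ)^5
          - (lam0:ℂ)^4 - (lam0:ℂ)^3 + (lam0:ℂ) + 1) = 0 := by
        exact_mod_cast congrArg (fun x : ℝ => (x : ℂ)) hlam0root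
      rw [← lehmer_fac lam hinj hroot]
      simp only [lehmer, Polynomial.eval_map]
      simpa using this
  · obtain ⟨lam, hinj, hroot, hsmall⟩ := Statement6Aux.exists_lam_N
    rw [_root_.mahlerMeasure, charpoly_M5N, recip_M5N]
    apply Statement6Aux.key lam0 h1 0 lam _ (lehmerN_fac lam hinj hroot) hsmall
    refine ⟨(-lam0 : ℂ), ?_, ?_⟩
    · rw [norm_neg]
      simp [Complex.norm_real, Real.norm_eq_abs, abs_of_pos (by linarith : (0:ℝ) < lam0)]
    · have hps : ((-lam0:ℂ))^10 - ((-lam0:ℂ))^9 + ((-lam0:ℂ))^7 - ((-lam0:ℂ))^6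
          + ((-lam0:ℂ))^5 - ((-lam0:ℂ))^4 + ((-lam0:ℂ))^3 - (-lam0:ℂ) + 1 = 0 := by
        have hr : ((-lam0:ℝ))^10 - ((-lam0:ℝ))^9 + ((-lam0:ℝ))^7 - ((-lam0:ℝ))^6
            + ((-lam0:ℝ))^5 - ((-lam0:ℝ))^4 + ((-lam0:ℝ))^3 - (-lam0:ℝ) + 1 = 0 := by
          linear_combination hlam0root
        exact_mod_cast congrArg (fun x : ℝ => (x : ℂ)) hr
      simp only [Polynomial.eval_map]
      push_cast
      simpa using hps


end
end

section
/- For all integers a and b: (i) if |a| ≥ 1 and |b| ≤ 2 then the 2×2 matrix with rows (2,a),(a,b) is minimal noncyclotomic and has Mahler measure greater than 1.722; (ii) if |a| ≥ 2 and |b| ≤ 1 then the 2×2 matrix with rows (1,a),(a,b) is minimal noncyclotomic and has Mahler measure greater than 1.722; (iii) if a ≥ 3 then the 2×2 matrix with rows (0,a),(a,0) is minimal noncyclotomic and has Mahler measure greater than 1.722. -/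
open Polynomial Matrix

noncomputable section

/-! ### Auxiliary lemmas -/

lemma charpoly_1x1' (x : ℤ) : (!![x]).charpoly = X - C x := by
  rw [Matrix.charpoly, Matrix.det_fin_one, charmatrix_apply_eq]
  simp

lemma specRad_1x1' (x : ℤ) : specRad !![x] = |(x:ℝ)| := by
  rw [specRad, charpoly_1x1']
  have : ((X - C x : ℤ[X]).map (Int.castRingHom ℝ)) = X - C (x:ℝ) := by
    simp
  rw [this, roots_X_sub_C]
  have hset : {r : ℝ | ∃ y ∈ ({(x:ℝ)} : Multiset ℝ), |y| = r} = {|(x:ℝ)|} := by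
    ext r
    simp [eq_comm]
  rw [hset, csSup_singleton]

lemma charpoly_2x2' (c a b : ℤ) :
    (!![c,a;a,b]).charpoly = X^2 - C (c+b) * X + C (c*b-a*a) := by
  rw [Matrix.charpoly, Matrix.det_fin_two]
  rw [charmatrix_apply_eq, charmatrix_apply_eq,
    charmatrix_apply_ne _ _ _ (by decide), charmatrix_apply_ne _ _ _ (by decide)]
  simp only [Matrix.cons_val', Matrix.cons_val_zero, Matrix.cons_val_one, Matrix.head_cons,
    Matrix.empty_val', Matrix.cons_val_fin_one, Matrix.head_fin_const, Matrix.of_apply]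
  simp only [C_add, C_mul, C_sub]
  ring

lemma specRad_2x2' (c a b : ℤ) (l1 l2 : ℝ)
    (e1 : l1 + l2 = ((c+b : ℤ) : ℝ)) (e2 : l1 * l2 = ((c*b - a*a : ℤ) : ℝ)) :
    specRad !![c,a;a,b] = max |l1| |l2| := by
  rw [specRad, charpoly_2x2']
  have hmap : ((X^2 - C (c+b) * X + C (c*b-a*a) : ℤ[X]).map (Int.castRingHom ℝ))
      = (X - C l1) * (X - C l2) := by
    simp only [Polynomial.map_add, Polynomial.map_sub, Polynomial.map_mul, Polynomial.map_pow,
      Polynomial.map_X, Polynomial.map_C]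
    rw [eq_intCast, eq_intCast, ← e1, ← e2]
    simp only [C_add, C_mul]
    ring
  rw [hmap, roots_mul (by exact mul_ne_zero (X_sub_C_ne_zero l1) (X_sub_C_ne_zero l2)),
    roots_X_sub_C, roots_X_sub_C]
  have hset : {r : ℝ | ∃ y ∈ ({l1} + {l2} : Multiset ℝ), |y| = r} = {|l1|, |l2|} := by
    ext r
    constructor
    · rintro ⟨y, hy, rfl⟩
      simp only [Multiset.mem_add, Multiset.mem_singleton] at hy
      rcases hy with rfl | rfl
      · exact Or.inl rfl
      · exact Or.inr rfl
    · rintro (rfl | rfl)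
      · exact ⟨l1, by simp⟩
      · exact ⟨l2, by simp⟩
  rw [hset, csSup_pair]

lemma recip2 (t n : ℤ) :
    recipPoly 2 (X^2 - C t * X + C n)
      = X^4 - C t * X^3 + C (n+2) * X^2 - C t * X + 1 := by
  have h0 : (X^2 - C t * X + C n).coeff 0 = n := by
    simp only [coeff_add, coeff_sub, coeff_X_pow, coeff_C_mul, coeff_X, coeff_C]; norm_num
  have h1 : (X^2 - C t * X + C n).coeff 1 = -t := by
    simp only [coeff_add, coeff_sub, coeff_X_pow, coeff_C_mul, coeff_X, coeff_C]; norm_num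
  have h2 : (X^2 - C t * X + C n).coeff 2 = 1 := by
    simp only [coeff_add, coeff_sub, coeff_X_pow, coeff_C_mul, coeff_X, coeff_C]; norm_num
  rw [recipPoly, Finset.sum_range_succ, Finset.sum_range_succ, Finset.sum_range_one,
    h0, h1, h2]
  simp only [C_add, C_neg, C_1]
  norm_num
  ring

lemma mahler_eq (c a b : ℤ) (z₁ z₂ z₃ z₄ : ℂ)
    (e1 : (z₁ + z₂) + (z₃ + z₄) = ((c+b : ℤ) : ℂ))
    (e2 : (z₁ + z₂) * (z₃ + z₄) = ((c*b - a*a : ℤ) : ℂ))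
    (p12 : z₁ * z₂ = 1) (p34 : z₃ * z₄ = 1) :
    mahlerMeasure !![c,a;a,b]
      = (max 1 (‖z₁‖) * max 1 (‖z₂‖))
        * (max 1 (‖z₃‖) * max 1 (‖z₄‖)) := by
  have hmap : ((recipPoly 2 (!![c,a;a,b]).charpoly).map (Int.castRingHom ℂ))
      = ((X - C z₁) * (X - C z₂)) * ((X - C z₃) * (X - C z₄)) := by
    rw [charpoly_2x2', recip2]
    simp only [Polynomial.map_add, Polynomial.map_sub, Polynomial.map_mul, Polynomial.map_pow,
      Polynomial.map_X, Polynomial.map_C, Polynomial.map_one, Int.coe_castRingHom]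
    have E1 : (C z₁ + C z₂) + (C z₃ + C z₄) = C (((c+b : ℤ) : ℂ)) := by
      rw [← C_add, ← C_add, ← C_add, e1]
    have E2 : (C z₁ + C z₂) * (C z₃ + C z₄) = C (((c*b - a*a : ℤ) : ℂ)) := by
      rw [← C_add, ← C_add, ← C_mul, e2]
    have E3 : C z₁ * C z₂ = (1 : ℂ[X]) := by rw [← C_mul, p12, C_1]
    have E4 : C z₃ * C z₄ = (1 : ℂ[X]) := by rw [← C_mul, p34, C_1]
    have hc : (C (((c*b - a*a + 2 : ℤ) : ℂ)) : ℂ[X]) = C (((c*b - a*a : ℤ) : ℂ)) + 2 := by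
      push_cast
      rw [C_add, map_ofNat]
    rw [hc]
    linear_combination ((X:ℂ[X])^3 + X) * E1 + (-(X:ℂ[X])^2) * E2
      + (-(X:ℂ[X])^2 + (C z₃ + C z₄) * X - C z₃ * C z₄) * E3
      + (-(X:ℂ[X])^2 + (C z₁ + C z₂) * X - 1) * E4
  rw [_root_.mahlerMeasure, hmap,
    roots_mul (mul_ne_zero (mul_ne_zero (X_sub_C_ne_zero z₁) (X_sub_C_ne_zero z₂))
      (mul_ne_zero (X_sub_C_ne_zero z₃) (X_sub_C_ne_zero z₄))),
    roots_mul (mul_ne_zero (X_sub_C_ne_zero z₁) (X_sub_C_ne_zero z₂)),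
    roots_mul (mul_ne_zero (X_sub_C_ne_zero z₃) (X_sub_C_ne_zero z₄)),
    roots_X_sub_C, roots_X_sub_C, roots_X_sub_C, roots_X_sub_C]
  simp [Multiset.prod_add]
  ring

lemma maxmul_ge_one (x y : ℝ) : 1 ≤ max 1 x * max 1 y := by
  have h1 : (1:ℝ) ≤ max 1 x := le_max_left 1 x
  have h2 : (1:ℝ) ≤ max 1 y := le_max_left 1 y
  nlinarith

lemma pair_unit (l : ℝ) : ∃ z w : ℂ, z + w = (l:ℂ) ∧ z * w = 1 ∧
    1 ≤ max 1 (‖z‖) * max 1 (‖w‖) := by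
  rcases le_total (l^2) 4 with h | h
  · refine ⟨⟨l/2, Real.sqrt (4 - l^2)/2⟩, ⟨l/2, -(Real.sqrt (4-l^2)/2)⟩, ?_, ?_,
      maxmul_ge_one _ _⟩
    · apply Complex.ext <;> simp
    · have hs : Real.sqrt (4 - l^2) ^ 2 = 4 - l^2 := Real.sq_sqrt (by linarith)
      apply Complex.ext <;> simp [Complex.mul_re, Complex.mul_im] <;> nlinarith
  · have hs : Real.sqrt (l^2 - 4) ^ 2 = l^2 - 4 := Real.sq_sqrt (by linarith)
    refine ⟨(((l + Real.sqrt (l^2-4))/2 : ℝ) : ℂ), (((l - Real.sqrt (l^2-4))/2 : ℝ) : ℂ), ?_, ?_,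
      maxmul_ge_one _ _⟩
    · push_cast; ring
    · rw [← Complex.ofReal_mul,
        show ((l + Real.sqrt (l^2-4))/2) * ((l - Real.sqrt (l^2-4))/2) = 1 by nlinarith]
      norm_num

lemma pair_big (l m : ℝ) (hm : 2 ≤ m) (hl : m ≤ l) : ∃ z w : ℂ, z + w = (l:ℂ) ∧ z * w = 1 ∧
    (m + Real.sqrt (m^2-4))/2 ≤ max 1 (‖z‖) * max 1 (‖w‖) := by
  have hl2 : 0 ≤ l^2 - 4 := by nlinarith
  have hs : Real.sqrt (l^2 - 4) ^ 2 = l^2 - 4 := Real.sq_sqrt hl2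
  have hsn : 0 ≤ Real.sqrt (l^2-4) := Real.sqrt_nonneg _
  refine ⟨(((l + Real.sqrt (l^2-4))/2 : ℝ) : ℂ), (((l - Real.sqrt (l^2-4))/2 : ℝ) : ℂ), ?_, ?_, ?_⟩
  · push_cast; ring
  · rw [← Complex.ofReal_mul,
      show ((l + Real.sqrt (l^2-4))/2) * ((l - Real.sqrt (l^2-4))/2) = 1 by nlinarith]
    norm_num
  · have hmono : Real.sqrt (m^2-4) ≤ Real.sqrt (l^2-4) :=
      Real.sqrt_le_sqrt (by nlinarith)
    have habs : ‖(((l + Real.sqrt (l^2-4))/2 : ℝ) : ℂ)‖ = (l + Real.sqrt (l^2-4))/2 := by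
      rw [Complex.norm_real, Real.norm_eq_abs, abs_of_nonneg (by linarith)]
    calc (m + Real.sqrt (m^2-4))/2 ≤ (l + Real.sqrt (l^2-4))/2 := by linarith
    _ ≤ max 1 (‖(((l + Real.sqrt (l^2-4))/2 : ℝ) : ℂ)‖) := by
        rw [habs]; exact le_max_right _ _
    _ ≤ _ := le_mul_of_one_le_right (by positivity) (le_max_left _ _)

lemma pair_bigneg (l m : ℝ) (hm : 2 ≤ m) (hl : l ≤ -m) : ∃ z w : ℂ, z + w = (l:ℂ) ∧ z * w = 1 ∧
    (m + Real.sqrt (m^2-4))/2 ≤ max 1 (‖z‖) * max 1 (‖w‖) := by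
  have hl2 : 0 ≤ l^2 - 4 := by nlinarith
  have hs : Real.sqrt (l^2 - 4) ^ 2 = l^2 - 4 := Real.sq_sqrt hl2
  have hsn : 0 ≤ Real.sqrt (l^2-4) := Real.sqrt_nonneg _
  refine ⟨(((l - Real.sqrt (l^2-4))/2 : ℝ) : ℂ), (((l + Real.sqrt (l^2-4))/2 : ℝ) : ℂ), ?_, ?_, ?_⟩
  · push_cast; ring
  · rw [← Complex.ofReal_mul,
      show ((l - Real.sqrt (l^2-4))/2) * ((l + Real.sqrt (l^2-4))/2) = 1 by nlinarith]
    norm_num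
  · have hmono : Real.sqrt (m^2-4) ≤ Real.sqrt (l^2-4) :=
      Real.sqrt_le_sqrt (by nlinarith)
    have habs : ‖(((l - Real.sqrt (l^2-4))/2 : ℝ) : ℂ)‖
        = (-l + Real.sqrt (l^2-4))/2 := by
      rw [Complex.norm_real, Real.norm_eq_abs, abs_of_nonpos (by linarith)]
      ring
    calc (m + Real.sqrt (m^2-4))/2 ≤ (-l + Real.sqrt (l^2-4))/2 := by linarith
    _ ≤ max 1 (‖(((l - Real.sqrt (l^2-4))/2 : ℝ) : ℂ)‖) := by
        rw [habs]; exact le_max_right _ _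
    _ ≤ _ := le_mul_of_one_le_right (by positivity) (le_max_left _ _)

lemma crux (c a b : ℤ) (hc : |(c:ℝ)| ≤ 2) (hb : |(b:ℝ)| ≤ 2)
    (l1 l2 m1 m2 : ℝ)
    (e1 : l1 + l2 = ((c+b : ℤ) : ℝ)) (e2 : l1 * l2 = ((c*b - a*a : ℤ) : ℝ))
    (hspec : 2 < max |l1| |l2|)
    (hm2 : 0 ≤ m2) (hm : (1.722:ℝ) < m1 * m2)
    (H1 : ∃ z w : ℂ, z + w = (l1:ℂ) ∧ z * w = 1 ∧
      m1 ≤ max 1 (‖z‖) * max 1 (‖w‖))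
    (H2 : ∃ z w : ℂ, z + w = (l2:ℂ) ∧ z * w = 1 ∧
      m2 ≤ max 1 (‖z‖) * max 1 (‖w‖)) :
    MinimalNoncyclotomic !![c,a;a,b] ∧ (1.722:ℝ) < mahlerMeasure !![c,a;a,b] := by
  obtain ⟨z₁, z₂, hz12, p12, hB1⟩ := H1
  obtain ⟨z₃, z₄, hz34, p34, hB2⟩ := H2
  have e1C : (z₁ + z₂) + (z₃ + z₄) = ((c+b : ℤ) : ℂ) := by
    rw [hz12, hz34, ← Complex.ofReal_add, e1]
    push_cast
    ring
  have e2C : (z₁ + z₂) * (z₃ + z₄) = ((c*b - a*a : ℤ) : ℂ) := by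
    rw [hz12, hz34, ← Complex.ofReal_mul, e2]
    push_cast
    ring
  refine ⟨⟨?_, ?_⟩, ?_⟩
  · rw [specRad_2x2' c a b l1 l2 e1 e2]
    exact hspec
  · intro i
    fin_cases i
    · have hd : deleteRC !![c,a;a,b] 0 = !![b] := by
        ext j k; fin_cases j; fin_cases k; rfl
      show specRad (deleteRC !![c,a;a,b] 0) ≤ 2
      rw [hd, specRad_1x1']
      exact hb
    · have hd : deleteRC !![c,a;a,b] 1 = !![c] := by
        ext j k; fin_cases j; fin_cases k; rfl
      show specRad (deleteRC !![c,a;a,b] 1) ≤ 2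
      rw [hd, specRad_1x1']
      exact hc
  · rw [mahler_eq c a b z₁ z₂ z₃ z₄ e1C e2C p12 p34]
    have hP1 : 1 ≤ max 1 (‖z₁‖) * max 1 (‖z₂‖) := maxmul_ge_one _ _
    calc (1.722:ℝ) < m1 * m2 := hm
    _ ≤ _ := mul_le_mul hB1 hB2 hm2 (by linarith)

lemma crux_pos (c a b : ℤ) (hc : |(c:ℝ)| ≤ 2) (hb : |(b:ℝ)| ≤ 2) (m : ℝ) (hm2 : 2 < m)
    (hnum : (1.722:ℝ) < (m + Real.sqrt (m^2-4))/2)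
    (hml : 2*m ≤ ((c+b:ℤ):ℝ) + Real.sqrt (((c-b:ℤ):ℝ)^2 + 4*(a:ℝ)^2)) :
    MinimalNoncyclotomic !![c,a;a,b] ∧ (1.722:ℝ) < mahlerMeasure !![c,a;a,b] := by
  have hD0 : (0:ℝ) ≤ ((c-b:ℤ):ℝ)^2 + 4*(a:ℝ)^2 := by positivity
  have hs : Real.sqrt (((c-b:ℤ):ℝ)^2 + 4*(a:ℝ)^2) ^ 2 = ((c-b:ℤ):ℝ)^2 + 4*(a:ℝ)^2 :=
    Real.sq_sqrt hD0
  have hsn := Real.sqrt_nonneg (((c-b:ℤ):ℝ)^2 + 4*(a:ℝ)^2)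
  have hl1 : m ≤ (((c+b:ℤ):ℝ) + Real.sqrt (((c-b:ℤ):ℝ)^2 + 4*(a:ℝ)^2))/2 := by linarith
  refine crux c a b hc hb
    ((((c+b:ℤ):ℝ) + Real.sqrt (((c-b:ℤ):ℝ)^2 + 4*(a:ℝ)^2))/2)
    ((((c+b:ℤ):ℝ) - Real.sqrt (((c-b:ℤ):ℝ)^2 + 4*(a:ℝ)^2))/2)
    ((m + Real.sqrt (m^2-4))/2) 1 (by ring) ?_ ?_ (by norm_num) (by linarith)
    (pair_big _ m hm2.le hl1) (pair_unit _)
  · push_cast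
    push_cast at hs
    linear_combination (-(1/4:ℝ)) * hs
  · have h1 : 2 < (((c+b:ℤ):ℝ) + Real.sqrt (((c-b:ℤ):ℝ)^2 + 4*(a:ℝ)^2))/2 := lt_of_lt_of_le hm2 hl1
    calc (2:ℝ) < (((c+b:ℤ):ℝ) + Real.sqrt (((c-b:ℤ):ℝ)^2 + 4*(a:ℝ)^2))/2 := h1
    _ ≤ |(((c+b:ℤ):ℝ) + Real.sqrt (((c-b:ℤ):ℝ)^2 + 4*(a:ℝ)^2))/2| := le_abs_self _
    _ ≤ _ := le_max_left _ _

lemma crux_sym (c a b : ℤ) (hc : |(c:ℝ)| ≤ 2) (hb : |(b:ℝ)| ≤ 2) (hcb : (c:ℝ) + b = 0)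
    (m : ℝ) (hm2 : 2 < m)
    (hnum : (1.722:ℝ) < ((m + Real.sqrt (m^2-4))/2)^2)
    (hml : 2*m ≤ Real.sqrt (((c-b:ℤ):ℝ)^2 + 4*(a:ℝ)^2)) :
    MinimalNoncyclotomic !![c,a;a,b] ∧ (1.722:ℝ) < mahlerMeasure !![c,a;a,b] := by
  have hD0 : (0:ℝ) ≤ ((c-b:ℤ):ℝ)^2 + 4*(a:ℝ)^2 := by positivity
  have hs : Real.sqrt (((c-b:ℤ):ℝ)^2 + 4*(a:ℝ)^2) ^ 2 = ((c-b:ℤ):ℝ)^2 + 4*(a:ℝ)^2 :=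
    Real.sq_sqrt hD0
  have hsn := Real.sqrt_nonneg (((c-b:ℤ):ℝ)^2 + 4*(a:ℝ)^2)
  have hq0 : (0:ℝ) ≤ (m + Real.sqrt (m^2-4))/2 := by
    have := Real.sqrt_nonneg (m^2-4); linarith
  refine crux c a b hc hb
    ((Real.sqrt (((c-b:ℤ):ℝ)^2 + 4*(a:ℝ)^2))/2)
    (-(Real.sqrt (((c-b:ℤ):ℝ)^2 + 4*(a:ℝ)^2))/2)
    ((m + Real.sqrt (m^2-4))/2) ((m + Real.sqrt (m^2-4))/2) ?_ ?_ ?_ hq0 (by linarith)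
    (pair_big _ m hm2.le (by linarith)) (pair_bigneg _ m hm2.le (by linarith))
  · push_cast
    linear_combination -hcb
  · push_cast
    push_cast at hs hcb
    linear_combination (-(1/4:ℝ)) * hs + (-((c:ℝ)+b)/4) * hcb
  · calc (2:ℝ) < (Real.sqrt (((c-b:ℤ):ℝ)^2 + 4*(a:ℝ)^2))/2 := by linarith
    _ ≤ |(Real.sqrt (((c-b:ℤ):ℝ)^2 + 4*(a:ℝ)^2))/2| := le_abs_self _
    _ ≤ _ := le_max_left _ _

lemma num_ge (m q : ℝ) (hq : 0 ≤ q) (h : q^2 ≤ m^2 - 4) (h2 : (1.722:ℝ)*2 < m + q) :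
    (1.722:ℝ) < (m + Real.sqrt (m^2-4))/2 := by
  have h1 : q ≤ Real.sqrt (m^2-4) := by
    rw [← Real.sqrt_sq hq]; exact Real.sqrt_le_sqrt h
  linarith

lemma sqrt5_gt : (2.2:ℝ) ≤ Real.sqrt 5 := by
  nlinarith [Real.sq_sqrt (show (0:ℝ) ≤ 5 by norm_num), Real.sqrt_nonneg (5:ℝ)]

lemma sqrt13_lb : (3.605551:ℝ) ≤ Real.sqrt 13 := by
  nlinarith [Real.sq_sqrt (show (0:ℝ) ≤ 13 by norm_num), Real.sqrt_nonneg (13:ℝ)]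

lemma num13 : (1.722:ℝ) < ((1+Real.sqrt 13)/2 + Real.sqrt (((1+Real.sqrt 13)/2)^2 - 4))/2 := by
  refine num_ge _ (1.1413:ℝ) (by norm_num) ?_ ?_
  · nlinarith [sqrt13_lb, Real.sq_sqrt (show (0:ℝ) ≤ 13 by norm_num)]
  · nlinarith [sqrt13_lb]

lemma num_sym5 : (1.722:ℝ) < ((Real.sqrt 5 + Real.sqrt ((Real.sqrt 5)^2-4))/2)^2 := by
  rw [Real.sq_sqrt (show (0:ℝ) ≤ 5 by norm_num)]
  rw [show (5:ℝ)-4 = 1 by norm_num, Real.sqrt_one]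
  nlinarith [sqrt5_gt, Real.sq_sqrt (show (0:ℝ) ≤ 5 by norm_num)]

lemma sqrt_ge_of_sq (q x : ℝ) (hq : 0 ≤ q) (h : q^2 ≤ x) : q ≤ Real.sqrt x := by
  rw [← Real.sqrt_sq hq]; exact Real.sqrt_le_sqrt h


/-- three infinite families of 2×2 minimal noncyclotomic matrices, each of
Mahler measure greater than `1.722`. -/
theorem statement9 (a b : ℤ) :
    ((1 ≤ |a| ∧ |b| ≤ 2) →
      MinimalNoncyclotomic !![2, a; a, b] ∧ (1.722 : ℝ) < mahlerMeasure !![2, a; a, b]) ∧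
    ((2 ≤ |a| ∧ |b| ≤ 1) →
      MinimalNoncyclotomic !![1, a; a, b] ∧ (1.722 : ℝ) < mahlerMeasure !![1, a; a, b]) ∧
    (3 ≤ a →
      MinimalNoncyclotomic !![0, a; a, 0] ∧ (1.722 : ℝ) < mahlerMeasure !![0, a; a, 0]) := by
  refine ⟨?_, ?_, ?_⟩
  · rintro ⟨ha, hb⟩
    have hbR : |(b:ℝ)| ≤ 2 := by
      have : ((|b|:ℤ):ℝ) ≤ 2 := by exact_mod_cast hb
      rwa [Int.cast_abs] at this
    have ha1 : (1:ℝ) ≤ (a:ℝ)^2 := by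
      have h1 : (1:ℤ) ≤ a^2 := by nlinarith [abs_mul_abs_self a, abs_nonneg a]
      exact_mod_cast h1
    obtain ⟨hbl, hbu⟩ := abs_le.mp hb
    interval_cases b
    · -- b = -2, use crux_sym with m = √5
      refine crux_sym 2 a (-2) (by norm_num) (by norm_num) (by norm_num)
        (Real.sqrt 5) (by nlinarith [sqrt5_gt]) num_sym5 ?_
      have harg : (((2 - -2:ℤ)):ℝ)^2 + 4*(a:ℝ)^2 = 16 + 4*(a:ℝ)^2 := by push_cast; ring
      rw [harg]
      calc 2*Real.sqrt 5 = Real.sqrt (2^2*5) := by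
            rw [Real.sqrt_mul (by norm_num), Real.sqrt_sq (by norm_num)]
      _ ≤ Real.sqrt (16 + 4*(a:ℝ)^2) := Real.sqrt_le_sqrt (by nlinarith)
    · -- b = -1, m = (1+√13)/2
      refine crux_pos 2 a (-1) (by norm_num) (by norm_num)
        ((1+Real.sqrt 13)/2) (by nlinarith [sqrt13_lb]) num13 ?_
      have harg : (((2 - -1:ℤ)):ℝ)^2 + 4*(a:ℝ)^2 = 9 + 4*(a:ℝ)^2 := by push_cast; ring
      rw [harg]
      have h13 : Real.sqrt 13 ≤ Real.sqrt (9 + 4*(a:ℝ)^2) := Real.sqrt_le_sqrt (by nlinarith)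
      push_cast
      linarith
    · -- b = 0, m = 12/5
      refine crux_pos 2 a 0 (by norm_num) (by norm_num) (12/5) (by norm_num)
        (num_ge _ (13/10) (by norm_num) (by norm_num) (by norm_num)) ?_
      have harg : (((2 - 0:ℤ)):ℝ)^2 + 4*(a:ℝ)^2 = 4 + 4*(a:ℝ)^2 := by push_cast; ring
      rw [harg]
      have := sqrt_ge_of_sq (14/5) (4 + 4*(a:ℝ)^2) (by norm_num) (by nlinarith)
      push_cast
      linarith
    · -- b = 1, m = 13/5
      refine crux_pos 2 a 1 (by norm_num) (by norm_num) (13/5) (by norm_num)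
        (num_ge _ (8/5) (by norm_num) (by norm_num) (by norm_num)) ?_
      have harg : (((2 - 1:ℤ)):ℝ)^2 + 4*(a:ℝ)^2 = 1 + 4*(a:ℝ)^2 := by push_cast; ring
      rw [harg]
      have := sqrt_ge_of_sq (11/5) (1 + 4*(a:ℝ)^2) (by norm_num) (by nlinarith)
      push_cast
      linarith
    · -- b = 2, m = 3
      refine crux_pos 2 a 2 (by norm_num) (by norm_num) 3 (by norm_num)
        (num_ge _ 2 (by norm_num) (by norm_num) (by norm_num)) ?_
      have harg : (((2 - 2:ℤ)):ℝ)^2 + 4*(a:ℝ)^2 = 4*(a:ℝ)^2 := by push_cast; ring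
      rw [harg]
      have := sqrt_ge_of_sq 2 (4*(a:ℝ)^2) (by norm_num) (by nlinarith)
      push_cast
      linarith
  · rintro ⟨ha, hb⟩
    have ha4 : (4:ℝ) ≤ (a:ℝ)^2 := by
      have h1 : (4:ℤ) ≤ a^2 := by nlinarith [abs_mul_abs_self a, abs_nonneg a]
      exact_mod_cast h1
    obtain ⟨hbl, hbu⟩ := abs_le.mp hb
    interval_cases b
    · -- b = -1, crux_sym m = √5
      refine crux_sym 1 a (-1) (by norm_num) (by norm_num) (by norm_num)
        (Real.sqrt 5) (by nlinarith [sqrt5_gt]) num_sym5 ?_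
      have harg : (((1 - -1:ℤ)):ℝ)^2 + 4*(a:ℝ)^2 = 4 + 4*(a:ℝ)^2 := by push_cast; ring
      rw [harg]
      calc 2*Real.sqrt 5 = Real.sqrt (2^2*5) := by
            rw [Real.sqrt_mul (by norm_num), Real.sqrt_sq (by norm_num)]
      _ ≤ Real.sqrt (4 + 4*(a:ℝ)^2) := Real.sqrt_le_sqrt (by nlinarith)
    · -- b = 0, m = 5/2
      refine crux_pos 1 a 0 (by norm_num) (by norm_num) (5/2) (by norm_num)
        (num_ge _ (3/2) (by norm_num) (by norm_num) (by norm_num)) ?_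
      have harg : (((1 - 0:ℤ)):ℝ)^2 + 4*(a:ℝ)^2 = 1 + 4*(a:ℝ)^2 := by push_cast; ring
      rw [harg]
      have := sqrt_ge_of_sq 4 (1 + 4*(a:ℝ)^2) (by norm_num) (by nlinarith)
      push_cast
      linarith
    · -- b = 1, m = 3
      refine crux_pos 1 a 1 (by norm_num) (by norm_num) 3 (by norm_num)
        (num_ge _ 2 (by norm_num) (by norm_num) (by norm_num)) ?_
      have harg : (((1 - 1:ℤ)):ℝ)^2 + 4*(a:ℝ)^2 = 4*(a:ℝ)^2 := by push_cast; ring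
      rw [harg]
      have := sqrt_ge_of_sq 4 (4*(a:ℝ)^2) (by norm_num) (by nlinarith)
      push_cast
      linarith
  · intro ha
    have haR : (3:ℝ) ≤ (a:ℝ) := by exact_mod_cast ha
    refine crux_pos 0 a 0 (by norm_num) (by norm_num) 3 (by norm_num)
      (num_ge _ 2 (by norm_num) (by norm_num) (by norm_num)) ?_
    have harg : (((0 - 0:ℤ)):ℝ)^2 + 4*(a:ℝ)^2 = 4*(a:ℝ)^2 := by push_cast; ring
    rw [harg]
    have := sqrt_ge_of_sq 6 (4*(a:ℝ)^2) (by norm_num) (by nlinarith)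
    push_cast
    linarith

end
end

section
/- If A is a minimal noncyclotomic integer symmetric matrix having some entry of absolute value at least 3, then A has at most 2 rows. -/
open Polynomial Matrix

noncomputable section

namespace St10Aux


variable {n : ℕ}

lemma isHermitian_of_isSymm {M : Matrix (Fin n) (Fin n) ℤ} (hM : M.IsSymm) :
    (M.map ⇑(Int.castRingHom ℝ)).IsHermitian := by
  rw [Matrix.IsHermitian, Matrix.conjTranspose_eq_transpose_of_trivial, ← Matrix.transpose_map]
  rw [Matrix.IsSymm] at hM
  rw [hM]

lemma quadForm_le {N : Matrix (Fin n) (Fin n) ℝ} (hH : N.IsHermitian) (m : ℝ)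
    (hm : ∀ k, |hH.eigenvalues k| ≤ m) (x : Fin n → ℝ) :
    |x ⬝ᵥ (N *ᵥ x)| ≤ m * (x ⬝ᵥ x) := by
  classical
  set U : Matrix (Fin n) (Fin n) ℝ := (hH.eigenvectorUnitary : Matrix (Fin n) (Fin n) ℝ) with hU
  have hstar : star U = Uᵀ := Matrix.conjTranspose_eq_transpose_of_trivial U
  have hU1 : Uᵀ * U = 1 := by
    rw [← hstar]; exact Unitary.coe_star_mul_self hH.eigenvectorUnitary
  have hU2 : U * Uᵀ = 1 := by
    rw [← hstar]; exact Unitary.coe_mul_star_self hH.eigenvectorUnitary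
  obtain ⟨y, hy⟩ : ∃ y : Fin n → ℝ, y = Uᵀ *ᵥ x := ⟨_, rfl⟩
  have hdiag : (RCLike.ofReal ∘ hH.eigenvalues : Fin n → ℝ) = hH.eigenvalues := by
    funext k; simp
  have hNx : N = U * Matrix.diagonal hH.eigenvalues * Uᵀ := by
    have := hH.spectral_theorem
    rwa [Unitary.conjStarAlgAut_apply, ← hU, hstar, hdiag] at this
  have key : x ⬝ᵥ (N *ᵥ x) = ∑ k, hH.eigenvalues k * y k ^ 2 := by
    conv_lhs => rw [hNx, Matrix.mul_assoc, ← Matrix.mulVec_mulVec, ← Matrix.mulVec_mulVec,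
      Matrix.dotProduct_mulVec x U, ← Matrix.mulVec_transpose, ← hy]
    simp only [dotProduct, Matrix.mulVec_diagonal]
    apply Finset.sum_congr rfl
    intro k _
    ring
  have key2 : x ⬝ᵥ x = ∑ k, y k ^ 2 := by
    have h3 : x ⬝ᵥ x = y ⬝ᵥ y := by
      calc x ⬝ᵥ x = ((U * Uᵀ) *ᵥ x) ⬝ᵥ x := by rw [hU2, Matrix.one_mulVec]
        _ = x ⬝ᵥ (U *ᵥ (Uᵀ *ᵥ x)) := by
            rw [Matrix.mulVec_mulVec, dotProduct_comm]
        _ = (Uᵀ *ᵥ x) ⬝ᵥ (Uᵀ *ᵥ x) := by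
            rw [Matrix.dotProduct_mulVec x U, ← Matrix.mulVec_transpose]
        _ = y ⬝ᵥ y := by rw [← hy]
    rw [h3, dotProduct]
    apply Finset.sum_congr rfl
    intro k _
    ring
  rw [key, key2, Finset.mul_sum]
  refine (Finset.abs_sum_le_sum_abs _ _).trans (Finset.sum_le_sum fun k _ => ?_)
  rw [abs_mul, abs_pow, sq_abs]
  exact mul_le_mul_of_nonneg_right (hm k) (sq_nonneg _)

lemma eval_charpoly (N : Matrix (Fin n) (Fin n) ℝ) (μ : ℝ) :
    N.charpoly.eval μ = (Matrix.diagonal (fun _ => μ) - N).det := by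
  rw [Matrix.charpoly, ← Polynomial.coe_evalRingHom, RingHom.map_det]
  congr 1
  ext a b
  by_cases h : a = b <;>
    simp [Matrix.charmatrix_apply, Matrix.diagonal_apply, h]

lemma eigenvalue_isRoot {N : Matrix (Fin n) (Fin n) ℝ} (hH : N.IsHermitian) (k : Fin n) :
    N.charpoly.IsRoot (hH.eigenvalues k) := by
  have hs : hH.eigenvalues k ∈ spectrum ℝ N := hH.eigenvalues_mem_spectrum_real k
  rw [spectrum.mem_iff] at hs
  have hdet : ¬ IsUnit (algebraMap ℝ (Matrix (Fin n) (Fin n) ℝ) (hH.eigenvalues k) - N).det := by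
    intro hu
    exact hs ((Matrix.isUnit_iff_isUnit_det _).2 hu)
  have : (algebraMap ℝ (Matrix (Fin n) (Fin n) ℝ) (hH.eigenvalues k) - N).det = 0 := by
    by_contra h0
    exact hdet (isUnit_iff_ne_zero.2 h0)
  rw [Polynomial.IsRoot, eval_charpoly]
  rwa [Matrix.algebraMap_eq_diagonal] at this
  
lemma specRad_lower {M : Matrix (Fin n) (Fin n) ℤ} (hM : M.IsSymm) (i j : Fin n)
    (h3 : 3 ≤ |M i j|) :
    ∃ μ : ℝ, μ ∈ ((M.charpoly.map (Int.castRingHom ℝ)).roots) ∧ 3 ≤ |μ| := by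
  classical
  haveI : Nonempty (Fin n) := ⟨i⟩
  set N : Matrix (Fin n) (Fin n) ℝ := M.map ⇑(Int.castRingHom ℝ) with hN
  have hH : N.IsHermitian := isHermitian_of_isSymm hM
  set m : ℝ := Finset.univ.sup' (Finset.univ_nonempty (α := Fin n)) (fun k => |hH.eigenvalues k|) with hm
  have hmk : ∀ k, |hH.eigenvalues k| ≤ m := by
    intro k; rw [hm]; exact Finset.le_sup' (fun k => |hH.eigenvalues k|) (Finset.mem_univ k)
  -- vectors
  set u : Fin n → ℝ := Pi.single i 1 with hu
  set v : Fin n → ℝ := Pi.single j 1 with hv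
  have quv : ∀ a b : Fin n, (Pi.single a 1 : Fin n → ℝ) ⬝ᵥ (N *ᵥ Pi.single b 1) = N a b := by
    intro a b
    rw [Matrix.mulVec_single, single_dotProduct]
    simp
  have hNsymm : ∀ a b, N a b = N b a := by
    intro a b
    have := congrFun (congrFun hM.symm a) b
    simp only [Matrix.transpose_apply] at this
    simp only [hN, Matrix.map_apply]
    exact congrArg _ this
  have expand : ((u + v) ⬝ᵥ (N *ᵥ (u + v))) - ((u - v) ⬝ᵥ (N *ᵥ (u - v))) = 4 * N i j := by
    simp only [Matrix.mulVec_add, Matrix.mulVec_sub, add_dotProduct,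
      sub_dotProduct, dotProduct_add, dotProduct_sub, hu, hv, quv]
    rw [hNsymm j i]
    ring
  have dotuu : u ⬝ᵥ u = 1 := by
    rw [hu, single_dotProduct]
    simp
  have dotvv : v ⬝ᵥ v = 1 := by
    rw [hv, single_dotProduct]
    simp
  have dotsum : ((u + v) ⬝ᵥ (u + v)) + ((u - v) ⬝ᵥ (u - v)) = 4 := by
    simp only [add_dotProduct, sub_dotProduct, dotProduct_add,
      dotProduct_sub, dotuu, dotvv]
    ring
  have hb1 := quadForm_le hH m hmk (u + v)
  have hb2 := quadForm_le hH m hmk (u - v)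
  have hNij : (3 : ℝ) ≤ |N i j| := by
    have : ((3 : ℤ) : ℝ) ≤ (|M i j| : ℝ) := by exact_mod_cast h3
    simpa [hN, Matrix.map_apply] using this
  have h4m : (12 : ℝ) ≤ 4 * m := by
    have h12 : (12 : ℝ) ≤ |((u + v) ⬝ᵥ (N *ᵥ (u + v))) - ((u - v) ⬝ᵥ (N *ᵥ (u - v)))| := by
      rw [expand, abs_mul]
      norm_num
      linarith [hNij]
    calc (12:ℝ) ≤ |((u + v) ⬝ᵥ (N *ᵥ (u + v))) - ((u - v) ⬝ᵥ (N *ᵥ (u - v)))| := h12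
      _ ≤ |(u + v) ⬝ᵥ (N *ᵥ (u + v))| + |(u - v) ⬝ᵥ (N *ᵥ (u - v))| := abs_sub _ _
      _ ≤ m * ((u + v) ⬝ᵥ (u + v)) + m * ((u - v) ⬝ᵥ (u - v)) := add_le_add hb1 hb2
      _ = 4 * m := by rw [← mul_add, dotsum]; ring
  have h3m : (3 : ℝ) ≤ m := by linarith
  obtain ⟨k, -, hk⟩ := Finset.exists_max_image Finset.univ
    (fun k => |hH.eigenvalues k|) Finset.univ_nonempty
  have hmle : m ≤ |hH.eigenvalues k| := by
    rw [hm]; exact Finset.sup'_le _ _ fun b _ => hk b (Finset.mem_univ b)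
  refine ⟨hH.eigenvalues k, ?_, ?_⟩
  · rw [← Matrix.charpoly_map]
    have hroot : N.charpoly.IsRoot (hH.eigenvalues k) := eigenvalue_isRoot hH k
    rw [Polynomial.mem_roots']
    exact ⟨(N.charpoly_monic).ne_zero, hroot⟩
  · exact h3m.trans hmle


lemma two_lt_specRad {n : ℕ} {M : Matrix (Fin n) (Fin n) ℤ} (hM : M.IsSymm) (i j : Fin n)
    (h3 : 3 ≤ |M i j|) : 2 < specRad M := by
  obtain ⟨μ, hmem, hμ⟩ := specRad_lower hM i j h3
  have hSfin : {r : ℝ | ∃ x ∈ (M.charpoly.map (Int.castRingHom ℝ)).roots, |x| = r}.Finite := by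
    apply Set.Finite.subset
      (Set.Finite.image (fun x : ℝ => |x|)
        ((M.charpoly.map (Int.castRingHom ℝ)).roots.toFinset.finite_toSet))
    rintro r ⟨x, hx, rfl⟩
    exact ⟨x, by simpa using hx, rfl⟩
  have hmemS : |μ| ∈ {r : ℝ | ∃ x ∈ (M.charpoly.map (Int.castRingHom ℝ)).roots, |x| = r} :=
    ⟨μ, hmem, rfl⟩
  have hle : |μ| ≤ specRad M := le_csSup hSfin.bddAbove hmemS
  linarith

end St10Aux

/-- a minimal noncyclotomic integer symmetric matrix with an entry of
absolute value at least 3 has at most 2 rows. -/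
theorem statement10 (d : ℕ) (A : Matrix (Fin d) (Fin d) ℤ) (hA : A.IsSymm)
    (hmin : MinimalNoncyclotomic A) (h : ∃ i j, 3 ≤ |A i j|) : d ≤ 2 := by
  by_contra hd
  push_neg at hd
  obtain ⟨i, j, h3⟩ := h
  obtain ⟨k, hk⟩ : ∃ k : Fin d, k ∉ ({i, j} : Finset (Fin d)) := by
    by_contra hall
    push_neg at hall
    have hsub : (Finset.univ : Finset (Fin d)) ⊆ {i, j} := fun x _ => hall x
    have hcard := Finset.card_le_card hsub
    have h2 : ({i, j} : Finset (Fin d)).card ≤ 2 :=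
      (Finset.card_insert_le _ _).trans (by simp)
    simp only [Finset.card_univ, Fintype.card_fin] at hcard
    omega
  simp only [Finset.mem_insert, Finset.mem_singleton, not_or] at hk
  obtain ⟨hki, hkj⟩ := hk
  have e : d - 1 + 1 = d := Nat.succ_pred_eq_of_pos k.pos
  have hii : Fin.cast e.symm i ≠ Fin.cast e.symm k := by
    intro hh
    exact hki (Fin.ext (by simpa using congrArg Fin.val hh)).symm
  have hjj : Fin.cast e.symm j ≠ Fin.cast e.symm k := by
    intro hh
    exact hkj (Fin.ext (by simpa using congrArg Fin.val hh)).symm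
  obtain ⟨i', hi'⟩ := Fin.exists_succAbove_eq hii
  obtain ⟨j', hj'⟩ := Fin.exists_succAbove_eq hjj
  have hBsymm : (deleteRC A k).IsSymm := by
    show (deleteRC A k)ᵀ = deleteRC A k
    ext a b
    simp only [Matrix.transpose_apply, deleteRC, Matrix.submatrix_apply]
    exact hA.apply _ _
  have hcast : ∀ x : Fin d, Fin.cast e (Fin.cast e.symm x) = x := fun x => Fin.ext (by simp)
  have hBij : deleteRC A k i' j' = A i j := by
    simp only [deleteRC, Matrix.submatrix_apply]
    rw [hi', hj', hcast, hcast]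
  have h2lt : 2 < specRad (deleteRC A k) :=
    St10Aux.two_lt_specRad hBsymm i' j' (by rw [hBij]; exact h3)
  exact absurd (hmin.2 k) (not_le.2 h2lt)


end
end

section
/- If A is a minimal noncyclotomic integer symmetric matrix all of whose entries have absolute value at most 2, and at least one entry has absolute value exactly 2, then A has at most 3 rows. -/
open Polynomial Matrix

noncomputable section

/-! ### Auxiliary lemmas -/

private lemma charpoly_eval' {n : Type*} [Fintype n] [DecidableEq n] (M : Matrix n n ℝ) (μ : ℝ) :
    M.charpoly.eval μ = (Matrix.diagonal (fun _ => μ) - M).det := by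
  rw [Matrix.charpoly, ← Polynomial.coe_evalRingHom, RingHom.map_det]
  congr 1
  ext i j
  by_cases h : i = j <;>
    simp [Matrix.charmatrix_apply, Matrix.diagonal, h, RingHom.mapMatrix_apply]

private lemma eigen_of_root' {n : Type*} [Fintype n] [DecidableEq n] {M : Matrix n n ℝ} {μ : ℝ}
    (h : μ ∈ M.charpoly.roots) : ∃ v, v ≠ 0 ∧ M *ᵥ v = μ • v := by
  have hdet : (Matrix.diagonal (fun _ => μ) - M).det = 0 := by
    rw [← charpoly_eval']
    exact Polynomial.isRoot_of_mem_roots h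
  obtain ⟨v, hv0, hv⟩ := Matrix.exists_mulVec_eq_zero_iff.mpr hdet
  refine ⟨v, hv0, ?_⟩
  rw [Matrix.sub_mulVec] at hv
  have hd : Matrix.diagonal (fun _ => μ) *ᵥ v = μ • v := by
    funext x; simp [Matrix.mulVec_diagonal]
  rw [hd] at hv
  exact (sub_eq_zero.mp hv).symm

private lemma root_of_eigen' {n : Type*} [Fintype n] [DecidableEq n] {M : Matrix n n ℝ} {μ : ℝ}
    {v : n → ℝ} (hv0 : v ≠ 0) (hv : M *ᵥ v = μ • v) : μ ∈ M.charpoly.roots := by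
  rw [Polynomial.mem_roots (M.charpoly_monic.ne_zero)]
  show M.charpoly.IsRoot μ
  rw [Polynomial.IsRoot, charpoly_eval']
  apply Matrix.exists_mulVec_eq_zero_iff.mp
  refine ⟨v, hv0, ?_⟩
  rw [Matrix.sub_mulVec, hv, sub_eq_zero]
  funext x; simp [Matrix.mulVec_diagonal]

private lemma key1 {n : Type*} [Fintype n] [DecidableEq n] {B : Matrix n n ℝ}
    (hB : B.IsHermitian) (hroots : ∀ μ ∈ B.charpoly.roots, |μ| ≤ 2) (i : n) :
    ∑ j, (B i j) ^ 2 ≤ 4 := by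
  classical
  set U : Matrix n n ℝ := (Matrix.IsHermitian.eigenvectorUnitary hB : Matrix n n ℝ) with hU
  have hU1 : U * star U = 1 :=
    Matrix.mem_unitaryGroup_iff.mp (Matrix.IsHermitian.eigenvectorUnitary hB).2
  have hU2 : star U * U = 1 :=
    Matrix.mem_unitaryGroup_iff'.mp (Matrix.IsHermitian.eigenvectorUnitary hB).2
  have hev : ∀ k, |hB.eigenvalues k| ≤ 2 := by
    intro k
    apply hroots
    apply root_of_eigen' (v := ⇑(hB.eigenvectorBasis k))
    · intro hzero
      exact hB.eigenvectorBasis.orthonormal.ne_zero k (PiLp.ext fun x => congrFun hzero x)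
    · exact hB.mulVec_eigenvectorBasis k
  have hBe : B = U * diagonal hB.eigenvalues * star U := by
    have := hB.spectral_theorem
    simpa [hU] using this
  have hBB : B * B = U * (diagonal (fun k => hB.eigenvalues k * hB.eigenvalues k) * star U) := by
    conv_lhs => rw [hBe]
    rw [← Matrix.diagonal_mul_diagonal]
    calc (U * diagonal hB.eigenvalues * star U) * (U * diagonal hB.eigenvalues * star U)
        = U * (diagonal hB.eigenvalues * ((star U * U) * (diagonal hB.eigenvalues * star U))) := by
          noncomm_ring
      _ = _ := by rw [hU2]; noncomm_ring
  have hdiagq : (B * B) i i = ∑ k, (hB.eigenvalues k * hB.eigenvalues k) * (U i k) ^ 2 := by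
    rw [hBB, Matrix.mul_apply]
    apply Finset.sum_congr rfl
    intro k _
    rw [Matrix.diagonal_mul]
    have : (star U) k i = U i k := by
      rw [Matrix.star_eq_conjTranspose, Matrix.conjTranspose_apply]; simp
    rw [this]; ring
  have hdiag2 : (B * B) i i = ∑ j, (B i j) ^ 2 := by
    rw [Matrix.mul_apply]
    apply Finset.sum_congr rfl
    intro k _
    have : B k i = B i k := by
      conv_lhs => rw [← hB.eq]
      rw [Matrix.conjTranspose_apply]; simp
    rw [this]; ring
  have hUnorm : ∑ k, (U i k) ^ 2 = 1 := by
    have h1 := congrFun (congrFun hU1 i) i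
    rw [Matrix.mul_apply] at h1
    rw [show (1 : Matrix n n ℝ) i i = 1 from Matrix.one_apply_eq i] at h1
    rw [← h1]
    apply Finset.sum_congr rfl
    intro k _
    rw [Matrix.star_eq_conjTranspose, Matrix.conjTranspose_apply]
    simp; ring
  calc ∑ j, (B i j) ^ 2 = ∑ k, (hB.eigenvalues k * hB.eigenvalues k) * (U i k) ^ 2 := by
        rw [← hdiag2, hdiagq]
    _ ≤ ∑ k, 4 * (U i k) ^ 2 := by
        apply Finset.sum_le_sum
        intro k _
        apply mul_le_mul_of_nonneg_right _ (sq_nonneg _)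
        nlinarith [hev k, sq_abs (hB.eigenvalues k), abs_nonneg (hB.eigenvalues k)]
    _ = 4 := by rw [← Finset.mul_sum, hUnorm, mul_one]

private def delEmb {d : ℕ} (m : Fin d) (j : Fin (d - 1)) : Fin d :=
  Fin.cast (Nat.succ_pred_eq_of_pos m.pos)
    ((Fin.cast (Nat.succ_pred_eq_of_pos m.pos).symm m).succAbove j)

private lemma deleteRC_eq {d : ℕ} (A : Matrix (Fin d) (Fin d) ℤ) (m : Fin d) :
    deleteRC A m = A.submatrix (delEmb m) (delEmb m) := rfl

private lemma delEmb_ne {d : ℕ} (m : Fin d) (j : Fin (d - 1)) : delEmb m j ≠ m := by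
  intro h
  apply Fin.succAbove_ne (Fin.cast (Nat.succ_pred_eq_of_pos m.pos).symm m) j
  apply Fin.ext
  simpa [Fin.coe_cast, delEmb] using congrArg Fin.val h

private lemma delEmb_inj {d : ℕ} (m : Fin d) : Function.Injective (delEmb m) := by
  intro a b h
  apply Fin.succAbove_right_injective (p := Fin.cast (Nat.succ_pred_eq_of_pos m.pos).symm m)
  apply Fin.ext
  simpa [Fin.coe_cast, delEmb] using congrArg Fin.val h

private lemma delEmb_surj {d : ℕ} {m l : Fin d} (h : l ≠ m) : ∃ j, delEmb m j = l := by
  obtain ⟨j, hj⟩ := Fin.exists_succAbove_eq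
    (x := Fin.cast (Nat.succ_pred_eq_of_pos m.pos).symm l)
    (y := Fin.cast (Nat.succ_pred_eq_of_pos m.pos).symm m)
    (by intro hc; exact h (Fin.ext (by simpa [Fin.coe_cast] using congrArg Fin.val hc)))
  exact ⟨j, Fin.ext (by simpa [Fin.coe_cast, delEmb] using congrArg Fin.val hj)⟩

private lemma sum_delEmb {d : ℕ} (m : Fin d) (g : Fin d → ℝ) :
    ∑ k : Fin (d - 1), g (delEmb m k) = ∑ l ∈ Finset.univ.erase m, g l := by
  refine Finset.sum_bij (fun k _ => delEmb m k) ?_ ?_ ?_ ?_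
  · intro a _; exact Finset.mem_erase.mpr ⟨delEmb_ne m a, Finset.mem_univ _⟩
  · intro a _ b _ h; exact delEmb_inj m h
  · intro b hb
    obtain ⟨j, hj⟩ := delEmb_surj (Finset.mem_erase.mp hb).1
    exact ⟨j, Finset.mem_univ _, hj⟩
  · intro a _; rfl

private lemma absRoot_le_specRad {n : ℕ} (M : Matrix (Fin n) (Fin n) ℤ) {μ : ℝ}
    (h : μ ∈ ((M.map (Int.castRingHom ℝ)).charpoly).roots) : |μ| ≤ specRad M := by
  have h' : μ ∈ (M.charpoly.map (Int.castRingHom ℝ)).roots := by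
    rwa [← Matrix.charpoly_map]
  apply le_csSup
  · have he : {r : ℝ | ∃ x ∈ (M.charpoly.map (Int.castRingHom ℝ)).roots, |x| = r}
        = (fun x => |x|) '' ((M.charpoly.map (Int.castRingHom ℝ)).roots.toFinset : Set ℝ) := by
      ext r
      simp [Set.mem_image, Multiset.mem_toFinset]
    show BddAbove {r : ℝ | ∃ x ∈ (M.charpoly.map (Int.castRingHom ℝ)).roots, |x| = r}
    rw [he]
    exact (((M.charpoly.map (Int.castRingHom ℝ)).roots.toFinset.finite_toSet).image _).bddAbove
  · exact ⟨μ, h', rfl⟩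

private lemma exists_root_gt {n : ℕ} (M : Matrix (Fin n) (Fin n) ℤ) (h : 2 < specRad M) :
    ∃ μ ∈ ((M.map (Int.castRingHom ℝ)).charpoly).roots, 2 < |μ| := by
  by_contra hc
  push_neg at hc
  refine absurd (Real.sSup_le ?_ (by norm_num)) (not_le.mpr h)
  rintro r ⟨x, hx, rfl⟩
  exact hc x (by rwa [Matrix.charpoly_map])

/-- a minimal noncyclotomic integer symmetric matrix with all entries of
absolute value at most 2, and some entry of absolute value exactly 2, has at most 3 rows. -/
theorem statement11 (d : ℕ) (A : Matrix (Fin d) (Fin d) ℤ) (hA : A.IsSymm)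
    (hmin : MinimalNoncyclotomic A)
    (hall : ∀ i j, |A i j| ≤ 2) (h2 : ∃ i j, |A i j| = 2) : d ≤ 3 := by
  by_contra hd
  push_neg at hd
  have hd4 : 4 ≤ d := hd
  obtain ⟨hρ, hsub⟩ := hmin
  -- Step 1: row sums of squares in any deleted submatrix are at most 4
  have hL1 : ∀ (m r : Fin d), r ≠ m →
      ∑ l ∈ Finset.univ.erase m, ((A r l : ℝ)) ^ 2 ≤ 4 := by
    intro m r hrm
    set B : Matrix (Fin (d - 1)) (Fin (d - 1)) ℝ := (deleteRC A m).map (Int.castRingHom ℝ)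
      with hBdef
    have hsymm : (deleteRC A m)ᵀ = deleteRC A m := by
      rw [deleteRC_eq, Matrix.transpose_submatrix, hA.eq]
    have hherm : B.IsHermitian := by
      rw [Matrix.IsHermitian, Matrix.conjTranspose_eq_transpose_of_trivial, hBdef,
        ← Matrix.transpose_map, hsymm]
    have hroots : ∀ μ ∈ B.charpoly.roots, |μ| ≤ 2 := fun μ hμ =>
      le_trans (absRoot_le_specRad (deleteRC A m) hμ) (hsub m)
    obtain ⟨r', hr'⟩ := delEmb_surj hrm
    have hkey := key1 hherm hroots r'
    have hBent : ∀ k, B r' k = ((A r (delEmb m k) : ℝ)) := by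
      intro k
      rw [hBdef, deleteRC_eq]
      simp [Matrix.map_apply, Matrix.submatrix_apply, hr']
    calc ∑ l ∈ Finset.univ.erase m, ((A r l : ℝ)) ^ 2
        = ∑ k : Fin (d - 1), ((A r (delEmb m k) : ℝ)) ^ 2 :=
          (sum_delEmb m fun l => ((A r l : ℝ)) ^ 2).symm
      _ = ∑ k, (B r' k) ^ 2 := by
          apply Finset.sum_congr rfl
          intro k _
          rw [hBent k]
      _ ≤ 4 := hkey
  -- Step 2: rows containing a ±2 entry vanish elsewhere
  have hclear : ∀ p q : Fin d, |A p q| = 2 → ∀ l, l ≠ q → A p l = 0 := by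
    intro p q hpq l hlq
    have hex : ∃ m : Fin d, m ∉ ({p, q, l} : Finset (Fin d)) := by
      by_contra hc
      push_neg at hc
      have h1 : (Finset.univ : Finset (Fin d)) ⊆ {p, q, l} := fun x _ => hc x
      have h2 := Finset.card_le_card h1
      have h3 : ({p, q, l} : Finset (Fin d)).card ≤ 3 := by
        apply le_trans (Finset.card_insert_le _ _)
        have := Finset.card_insert_le q ({l} : Finset (Fin d))
        simp at this ⊢
        omega
      rw [Finset.card_univ, Fintype.card_fin] at h2
      omega
    obtain ⟨m, hm⟩ := hex
    simp only [Finset.mem_insert, Finset.mem_singleton, not_or] at hm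
    obtain ⟨hmp, hmq, hml⟩ := hm
    have hsum := hL1 m p (Ne.symm hmp)
    have hsubset : ({q, l} : Finset (Fin d)) ⊆ Finset.univ.erase m := by
      intro x hx
      simp only [Finset.mem_insert, Finset.mem_singleton] at hx
      rcases hx with rfl | rfl
      · exact Finset.mem_erase.mpr ⟨Ne.symm hmq, Finset.mem_univ _⟩
      · exact Finset.mem_erase.mpr ⟨Ne.symm hml, Finset.mem_univ _⟩
    have hpair : ∑ x ∈ ({q, l} : Finset (Fin d)), ((A p x : ℝ)) ^ 2
        ≤ ∑ x ∈ Finset.univ.erase m, ((A p x : ℝ)) ^ 2 :=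
      Finset.sum_le_sum_of_subset_of_nonneg hsubset (fun _ _ _ => sq_nonneg _)
    rw [Finset.sum_pair (Ne.symm hlq)] at hpair
    have hq2 : ((A p q : ℝ)) ^ 2 = 4 := by
      have : (A p q) ^ 2 = 4 := by
        have := sq_abs (A p q)
        rw [hpq] at this
        omega
      exact_mod_cast congrArg (fun z : ℤ => (z : ℝ)) this
    have hle0 : ((A p l : ℝ)) ^ 2 ≤ 0 := by linarith
    have : (A p l : ℝ) = 0 := by nlinarith [sq_nonneg ((A p l : ℝ))]
    exact_mod_cast this
  obtain ⟨i, j, hij⟩ := h2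
  have hrowi : ∀ l, l ≠ j → A i l = 0 := hclear i j hij
  have hji : A j i = A i j := hA.apply i j
  have hrowj : ∀ l, l ≠ i → A j l = 0 := hclear j i (by rw [hji]; exact hij)
  -- Step 3: eigenvector for |μ| > 2 vanishes at i, restrict to deleted matrix
  obtain ⟨μ, hμroot, hμ2⟩ := exists_root_gt A hρ
  obtain ⟨v, hv0, hv⟩ := eigen_of_root' hμroot
  have hmv : ∀ p, (∑ l, ((A p l : ℝ)) * v l) = μ * v p := by
    intro p
    have := congrFun hv p
    simpa [Matrix.mulVec, dotProduct, Matrix.map_apply] using this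
  have hei : ((A i j : ℝ)) * v j = μ * v i := by
    rw [← hmv i]
    refine (Finset.sum_eq_single (f := fun l => ((A i l : ℝ)) * v l) j ?_ ?_).symm
    · intro l _ hlj
      show ((A i l : ℝ)) * v l = 0
      rw [hrowi l hlj]
      simp
    · intro h; exact absurd (Finset.mem_univ j) h
  have hej : ((A j i : ℝ)) * v i = μ * v j := by
    rw [← hmv j]
    refine (Finset.sum_eq_single (f := fun l => ((A j l : ℝ)) * v l) i ?_ ?_).symm
    · intro l _ hli
      show ((A j l : ℝ)) * v l = 0
      rw [hrowj l hli]
      simp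
    · intro h; exact absurd (Finset.mem_univ i) h
  have hμsq : 4 < μ ^ 2 := by nlinarith [sq_abs μ, abs_nonneg μ]
  have h4 : ((A i j : ℝ)) * ((A j i : ℝ)) = 4 := by
    rw [hji]
    have : (A i j) * (A i j) = 4 := by
      have := sq_abs (A i j)
      rw [hij] at this
      nlinarith [this]
    exact_mod_cast congrArg (fun z : ℤ => (z : ℝ)) this
  have hvi : v i = 0 := by
    have hchain : μ ^ 2 * v i = 4 * v i := by
      calc μ ^ 2 * v i = μ * (μ * v i) := by ring
        _ = μ * (((A i j : ℝ)) * v j) := by rw [hei]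
        _ = ((A i j : ℝ)) * (μ * v j) := by ring
        _ = ((A i j : ℝ)) * (((A j i : ℝ)) * v i) := by rw [hej]
        _ = 4 * v i := by rw [← mul_assoc, h4]
    have h5 : (μ ^ 2 - 4) * v i = 0 := by linarith
    rcases mul_eq_zero.mp h5 with h6 | h6
    · exfalso; linarith
    · exact h6
  obtain ⟨l0, hl0⟩ : ∃ l, v l ≠ 0 := Function.ne_iff.mp hv0
  have hl0i : l0 ≠ i := fun h => hl0 (h ▸ hvi)
  set w : Fin (d - 1) → ℝ := fun k => v (delEmb i k) with hwdef
  have hw0 : w ≠ 0 := by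
    obtain ⟨k, hk⟩ := delEmb_surj hl0i
    intro hw
    apply hl0
    rw [← hk]
    exact congrFun hw k
  have hweig : ((deleteRC A i).map (Int.castRingHom ℝ)) *ᵥ w = μ • w := by
    funext k
    have hlhs : (((deleteRC A i).map (Int.castRingHom ℝ)) *ᵥ w) k
        = ∑ k', ((A (delEmb i k) (delEmb i k') : ℝ)) * v (delEmb i k') := by
      rw [deleteRC_eq]
      simp [Matrix.mulVec, dotProduct, Matrix.map_apply, Matrix.submatrix_apply, hwdef]
    have hsum : ∑ k', ((A (delEmb i k) (delEmb i k') : ℝ)) * v (delEmb i k')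
        = ∑ l ∈ Finset.univ.erase i, ((A (delEmb i k) l : ℝ)) * v l :=
      sum_delEmb i fun l => ((A (delEmb i k) l : ℝ)) * v l
    have hfull : ((A (delEmb i k) i : ℝ)) * v i
          + ∑ l ∈ Finset.univ.erase i, ((A (delEmb i k) l : ℝ)) * v l
        = ∑ l, ((A (delEmb i k) l : ℝ)) * v l :=
      Finset.add_sum_erase _ (fun l => ((A (delEmb i k) l : ℝ)) * v l) (Finset.mem_univ i)
    rw [hlhs, hsum]
    have : ∑ l ∈ Finset.univ.erase i, ((A (delEmb i k) l : ℝ)) * v l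
        = μ * v (delEmb i k) := by
      rw [← hmv (delEmb i k), ← hfull, hvi]
      ring
    rw [this]
    simp [hwdef]
  have hroot2 : μ ∈ ((deleteRC A i).map (Int.castRingHom ℝ)).charpoly.roots :=
    root_of_eigen' hw0 hweig
  have hle := absRoot_le_specRad (deleteRC A i) hroot2
  have := hsub i
  linarith

end
end

section
/- Every 3×3 minimal noncyclotomic integer symmetric matrix all of whose entries have absolute value at most 2 and having some entry of absolute value exactly 2 is equivalent to one of the following eight matrices (given by their rows): [(0,2,2),(2,0,2),(2,2,0)], [(0,2,2),(2,0,1),(2,1,0)], [(0,2,1),(2,0,1),(1,1,0)], [(0,2,0),(2,0,2),(0,2,0)], [(0,2,1),(2,0,1),(1,1,1)], [(0,2,1),(2,0,1),(1,1,−1)], [(0,2,0),(2,0,1),(0,1,1)], [(0,2,0),(2,0,1),(0,1,0)]. Moreover each of these eight matrices has spectral radius at least √5 and Mahler measure greater than 2.081. -/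
open Polynomial Matrix

noncomputable section

def E1 : Matrix (Fin 3) (Fin 3) ℤ := !![0,2,2; 2,0,2; 2,2,0]
def E2 : Matrix (Fin 3) (Fin 3) ℤ := !![0,2,2; 2,0,1; 2,1,0]
def E3 : Matrix (Fin 3) (Fin 3) ℤ := !![0,2,1; 2,0,1; 1,1,0]
def E4 : Matrix (Fin 3) (Fin 3) ℤ := !![0,2,0; 2,0,2; 0,2,0]
def E5 : Matrix (Fin 3) (Fin 3) ℤ := !![0,2,1; 2,0,1; 1,1,1]
def E6 : Matrix (Fin 3) (Fin 3) ℤ := !![0,2,1; 2,0,1; 1,1,-1]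
def E7 : Matrix (Fin 3) (Fin 3) ℤ := !![0,2,0; 2,0,1; 0,1,1]
def E8 : Matrix (Fin 3) (Fin 3) ℤ := !![0,2,0; 2,0,1; 0,1,0]


/-! ### Auxiliary machinery -/

section Aux

lemma specRad_bddAbove {d : ℕ} (A : Matrix (Fin d) (Fin d) ℤ) :
    BddAbove {r : ℝ | ∃ x ∈ (A.charpoly.map (Int.castRingHom ℝ)).roots, |x| = r} := by
  have hset : {r : ℝ | ∃ x ∈ (A.charpoly.map (Int.castRingHom ℝ)).roots, |x| = r} =
      (fun x => |x|) '' {x | x ∈ (A.charpoly.map (Int.castRingHom ℝ)).roots} := by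
    ext r; simp [eq_comm]
  rw [hset]
  exact (((A.charpoly.map (Int.castRingHom ℝ)).roots.toFinset.finite_toSet.subset
    (by intro x hx; simpa using hx)).image _).bddAbove

lemma abs_le_specRad {d : ℕ} {A : Matrix (Fin d) (Fin d) ℤ} {x : ℝ}
    (hx : x ∈ (A.charpoly.map (Int.castRingHom ℝ)).roots) : |x| ≤ specRad A :=
  le_csSup (specRad_bddAbove A) ⟨x, hx, rfl⟩

lemma specRad_le {d : ℕ} {A : Matrix (Fin d) (Fin d) ℤ} {c : ℝ} (hc : 0 ≤ c)
    (h : ∀ x ∈ (A.charpoly.map (Int.castRingHom ℝ)).roots, |x| ≤ c) : specRad A ≤ c :=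
  Real.sSup_le (by rintro r ⟨x, hx, rfl⟩; exact h x hx) hc

lemma exists_root_Icc {p : Polynomial ℝ} (hp : p ≠ 0) {a b : ℝ} (hab : a ≤ b)
    (ha : p.eval a ≤ 0) (hb : 0 ≤ p.eval b) : ∃ r ∈ Set.Icc a b, r ∈ p.roots := by
  obtain ⟨r, hr, hr0⟩ := intermediate_value_Icc hab p.continuousOn ⟨ha, hb⟩
  exact ⟨r, hr, by simpa [Polynomial.mem_roots, hp] using hr0⟩

lemma exists_root_Icc' {p : Polynomial ℝ} (hp : p ≠ 0) {a b : ℝ} (hab : a ≤ b)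
    (ha : 0 ≤ p.eval a) (hb : p.eval b ≤ 0) : ∃ r ∈ Set.Icc a b, r ∈ p.roots := by
  obtain ⟨r, hr, hr0⟩ := intermediate_value_Icc' hab p.continuousOn ⟨hb, ha⟩
  exact ⟨r, hr, by simpa [Polynomial.mem_roots, hp] using hr0⟩

def matOf (a b c d e f : ℤ) : Matrix (Fin 3) (Fin 3) ℤ := !![a,b,c;b,d,e;c,e,f]

lemma charpoly2 (a b c : ℤ) : (!![a,b;b,c] : Matrix (Fin 2) (Fin 2) ℤ).charpoly
    = X^2 - C (a+c) * X + C (a*c-b*b) := by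
  rw [Matrix.charpoly, Matrix.det_fin_two]
  simp [Matrix.charmatrix_apply, Matrix.diagonal]
  ring

lemma charpoly3 (a b c d e f : ℤ) : (matOf a b c d e f).charpoly
    = X^3 - C (a+d+f) * X^2 + C ((a*d-b*b)+(a*f-c*c)+(d*f-e*e)) * X
      - C (a*(d*f-e*e) - b*(b*f-e*c) + c*(b*e-d*c)) := by
  rw [matOf, Matrix.charpoly, Matrix.det_fin_three]
  simp [Matrix.charmatrix_apply, Matrix.diagonal]
  ring

lemma eval_map2 (t s : ℤ) (x : ℝ) :
    ((X^2 - C t * X + C s : Polynomial ℤ).map (Int.castRingHom ℝ)).eval x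
      = x^2 - t*x + s := by
  simp [Polynomial.map_sub, Polynomial.map_add, Polynomial.map_pow, Polynomial.map_mul]

lemma eval_map3 (t s D : ℤ) (x : ℝ) :
    ((X^3 - C t * X^2 + C s * X - C D : Polynomial ℤ).map (Int.castRingHom ℝ)).eval x
      = x^3 - t*x^2 + s*x - D := by
  simp [Polynomial.map_sub, Polynomial.map_add, Polynomial.map_pow, Polynomial.map_mul]

lemma minor_cond {a b c : ℤ} (ha : |a| ≤ 2) (hb : |b| ≤ 2) (hc : |c| ≤ 2)
    (h : specRad !![a,b;b,c] ≤ 2) :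
    b*b ≤ (2-a)*(2-c) ∧ b*b ≤ (2+a)*(2+c) := by
  set p := ((!![a,b;b,c] : Matrix (Fin 2) (Fin 2) ℤ).charpoly.map (Int.castRingHom ℝ)) with hp
  have hpe : ∀ x : ℝ, p.eval x = x^2 - (a+c)*x + (a*c-b*b) := by
    intro x; rw [hp, charpoly2, eval_map2]; push_cast; ring
  have hpne : p ≠ 0 := fun h0 => by
    have e0 := hpe 0; have e1 := hpe 1; have e2 := hpe (-1)
    rw [h0] at e0 e1 e2; simp at e0 e1 e2; linarith
  have haR : (-2:ℝ) ≤ a ∧ (a:ℝ) ≤ 2 := by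
    constructor <;> [exact_mod_cast neg_le_of_abs_le ha; exact_mod_cast le_of_abs_le ha]
  have hbR : (-2:ℝ) ≤ b ∧ (b:ℝ) ≤ 2 := by
    constructor <;> [exact_mod_cast neg_le_of_abs_le hb; exact_mod_cast le_of_abs_le hb]
  have hcR : (-2:ℝ) ≤ c ∧ (c:ℝ) ≤ 2 := by
    constructor <;> [exact_mod_cast neg_le_of_abs_le hc; exact_mod_cast le_of_abs_le hc]
  constructor
  · by_contra hlt
    push_neg at hlt
    have h2 : p.eval 2 < 0 := by
      rw [hpe]
      have h' : ((2:ℤ)-a)*(2-c) < b*b := by linarith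
      have h'' : ((2:ℝ)-a)*(2-c) < (b:ℝ)*b := by exact_mod_cast h'
      nlinarith
    have h10 : 0 ≤ p.eval 10 := by rw [hpe]; nlinarith [haR.1, haR.2, hbR.1, hbR.2, hcR.1, hcR.2]
    obtain ⟨r, hr, hroot⟩ := exists_root_Icc hpne (by norm_num) h2.le h10
    have hle := abs_le_specRad hroot
    have hr0 : p.eval r = 0 := by
      rw [Polynomial.mem_roots'] at hroot; exact hroot.2
    have hrle : r ≤ 2 := le_trans (le_abs_self r) (le_trans hle h)
    have hre : r = 2 := le_antisymm hrle hr.1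
    rw [hre] at hr0; linarith
  · by_contra hlt
    push_neg at hlt
    have h2 : p.eval (-2) < 0 := by
      rw [hpe]
      have h' : ((2:ℤ)+a)*(2+c) < b*b := by linarith
      have h'' : ((2:ℝ)+a)*(2+c) < (b:ℝ)*b := by exact_mod_cast h'
      nlinarith
    have h10 : 0 ≤ p.eval (-10) := by rw [hpe]; nlinarith [haR.1, haR.2, hbR.1, hbR.2, hcR.1, hcR.2]
    obtain ⟨r, hr, hroot⟩ := exists_root_Icc' hpne (by norm_num : (-10:ℝ) ≤ -2) h10 h2.le
    have hle := abs_le_specRad hroot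
    have hr0 : p.eval r = 0 := by
      rw [Polynomial.mem_roots'] at hroot; exact hroot.2
    have hge : -2 ≤ r := neg_le_of_abs_le (le_trans hle h)
    have hre : r = -2 := le_antisymm hr.2 hge
    rw [hre] at hr0; linarith

lemma cubic_cyclo {A : Matrix (Fin 3) (Fin 3) ℤ} {t s D : ℤ}
    (hcp : A.charpoly = X^3 - C t * X^2 + C s * X - C D)
    (c1 : 0 ≤ 8 - 4*t + 2*s - D) (c2 : 0 ≤ 12 - 4*t + s) (c3 : t ≤ 6)
    (c4 : -8 - 4*t - 2*s - D ≤ 0) (c5 : 0 ≤ 12 + 4*t + s) (c6 : -6 ≤ t) :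
    specRad A ≤ 2 := by
  apply specRad_le (by norm_num)
  intro x hx
  rw [Polynomial.mem_roots'] at hx
  have hx0 : x^3 - t*x^2 + s*x - D = 0 := by
    rw [← eval_map3, ← hcp]; exact hx.2
  have c1R : (0:ℝ) ≤ 8 - 4*t + 2*s - D := by exact_mod_cast c1
  have c2R : (0:ℝ) ≤ 12 - 4*t + s := by exact_mod_cast c2
  have c3R : (t:ℝ) ≤ 6 := by exact_mod_cast c3
  have c4R : (-8 - 4*t - 2*s - D : ℝ) ≤ 0 := by exact_mod_cast c4
  have c5R : (0:ℝ) ≤ 12 + 4*t + s := by exact_mod_cast c5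
  have c6R : (-6:ℝ) ≤ t := by exact_mod_cast c6
  rw [abs_le]
  constructor
  · by_contra hlt; push_neg at hlt
    nlinarith [pow_pos (by linarith : (0:ℝ) < -2 - x) 3, sq_nonneg (-2-x),
      mul_pos (pow_pos (by linarith : (0:ℝ) < -2 - x) 2) (by linarith : (0:ℝ) < -2 - x)]
  · by_contra hlt; push_neg at hlt
    nlinarith [pow_pos (by linarith : (0:ℝ) < x - 2) 3, sq_nonneg (x-2),
      mul_pos (pow_pos (by linarith : (0:ℝ) < x - 2) 2) (by linarith : (0:ℝ) < x - 2)]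

lemma deleteRC0 (a b c d e f : ℤ) : deleteRC (matOf a b c d e f) 0 = !![d,e;e,f] := by
  ext i j; fin_cases i <;> fin_cases j <;> rfl
lemma deleteRC1 (a b c d e f : ℤ) : deleteRC (matOf a b c d e f) 1 = !![a,c;c,f] := by
  ext i j; fin_cases i <;> fin_cases j <;> rfl
lemma deleteRC2 (a b c d e f : ℤ) : deleteRC (matOf a b c d e f) 2 = !![a,b;b,d] := by
  ext i j; fin_cases i <;> fin_cases j <;> rfl

lemma symm_matOf {A : Matrix (Fin 3) (Fin 3) ℤ} (h : A.IsSymm) :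
    A = matOf (A 0 0) (A 0 1) (A 0 2) (A 1 1) (A 1 2) (A 2 2) := by
  have hs : ∀ i j, A j i = A i j := fun i j => congrFun (congrFun h i) j
  ext i j
  fin_cases i <;> fin_cases j <;> simp [matOf] <;> rw [← hs] <;> rfl

lemma mequiv_of (A E : Matrix (Fin 3) (Fin 3) ℤ) (ε : ℤ) (σ : Fin 3 → Fin 3)
    (hσ : Function.Injective σ) (s : Fin 3 → ℤ)
    (hε : ε = 1 ∨ ε = -1) (hs : ∀ i, s i = 1 ∨ s i = -1)
    (h : ∀ i j, E i j = ε * (s i * s j * A (σ i) (σ j))) : MEquiv A E := by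
  have hσb : Function.Bijective σ := (Finite.injective_iff_bijective).1 hσ
  let e : Equiv.Perm (Fin 3) := Equiv.ofBijective σ hσb
  have he : ∀ i, e i = σ i := fun i => rfl
  let P : Matrix (Fin 3) (Fin 3) ℤ := Matrix.of fun i j => if σ j = i then s j else 0
  have hsq : ∀ i, s i * s i = 1 := by
    intro i; rcases hs i with h' | h' <;> rw [h'] <;> norm_num
  have hPtP : Pᵀ * P = 1 := by
    ext i j
    simp only [Matrix.mul_apply, Matrix.transpose_apply, Matrix.one_apply, P, Matrix.of_apply]
    rw [Finset.sum_eq_single (σ i)]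
    · by_cases hij : i = j
      · subst hij; simp [hsq]
      · have hne : σ j ≠ σ i := fun hh => hij (hσ hh).symm
        simp [hne, hij]
    · intro k _ hk; simp [Ne.symm hk]
    · simp
  have hPPt : P * Pᵀ = 1 := by
    ext i j
    simp only [Matrix.mul_apply, Matrix.transpose_apply, Matrix.one_apply, P, Matrix.of_apply]
    rw [← Equiv.sum_comp e.symm
      (fun k => (if σ k = i then s k else 0) * (if σ k = j then s k else 0))]
    have hσs : ∀ m, σ (e.symm m) = m := fun m => e.apply_symm_apply m
    rw [Finset.sum_congr rfl (fun m _ => by rw [hσs])]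
    rw [Finset.sum_eq_single i]
    · by_cases hij : i = j
      · subst hij; simp [hsq]
      · simp [hij, Ne.symm hij]
    · intro k _ hk; simp [hk]
    · simp
  refine ⟨ε, P, hε, hPtP, hPPt, ?_⟩
  ext i j
  rw [h i j]
  simp only [Matrix.smul_apply, Matrix.mul_apply, Matrix.transpose_apply, P, Matrix.of_apply,
    smul_eq_mul]
  congr 1
  rw [Finset.sum_eq_single (σ j)]
  · rw [Finset.sum_eq_single (σ i)]
    · simp only [if_pos rfl, if_true]; ring
    · intro k _ hk; simp [Ne.symm hk]
    · simp
  · intro k _ hk; simp [Ne.symm hk]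
  · simp

abbrev T6 := ℤ × ℤ × ℤ × ℤ × ℤ × ℤ
def sgn (x : Bool) : ℤ := if x then 1 else -1
def permT (p : Fin 6) (t : T6) : T6 :=
  match t with
  | (a,b,c,d,e,f) =>
    match p with
    | 0 => (a,b,c,d,e,f)
    | 1 => (a,c,b,f,e,d)
    | 2 => (d,b,e,a,c,f)
    | 3 => (f,e,c,d,b,a)
    | 4 => (d,e,b,f,c,a)
    | 5 => (f,c,e,a,b,d)
def tr (εb s1 s2 : Bool) (p : Fin 6) (t : T6) : T6 :=
  match permT p t with
  | (a,b,c,d,e,f) =>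
    (sgn εb * a, sgn εb * (sgn s1 * b), sgn εb * (sgn s2 * c),
     sgn εb * d, sgn εb * (sgn s1 * (sgn s2 * e)), sgn εb * f)
def mtOf (t : T6) : Matrix (Fin 3) (Fin 3) ℤ :=
  matOf t.1 t.2.1 t.2.2.1 t.2.2.2.1 t.2.2.2.2.1 t.2.2.2.2.2
def σf (p : Fin 6) : Fin 3 → Fin 3 :=
  match p with
  | 0 => ![0,1,2]
  | 1 => ![0,2,1]
  | 2 => ![1,0,2]
  | 3 => ![2,1,0]
  | 4 => ![1,2,0]
  | 5 => ![2,0,1]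

lemma sgn_or (x : Bool) : sgn x = 1 ∨ sgn x = -1 := by cases x <;> simp [sgn]
lemma sgn_sq (x : Bool) : sgn x ^ 2 = 1 := by cases x <;> simp [sgn]
lemma sgn_sq' (x : Bool) : sgn x * sgn x = 1 := by cases x <;> simp [sgn]

lemma bridge (εb s1 s2 : Bool) (p : Fin 6) (t : T6) :
    MEquiv (mtOf t) (mtOf (tr εb s1 s2 p t)) := by
  obtain ⟨a,b,c,d,e,f⟩ := t
  apply mequiv_of _ _ (sgn εb) (σf p) ?_ ![1, sgn s1, sgn s2] (sgn_or εb)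
    (fun i => by fin_cases i <;> simp [sgn_or]) ?_
  · fin_cases p <;> decide
  · intro i j
    fin_cases p <;> fin_cases i <;> fin_cases j <;>
      (simp [mtOf, matOf, tr, permT, σf, sgn_sq, sgn_sq']; try ring; try (left; ring)); all_goals exact Or.inl trivial

def Et : Fin 8 → T6 :=
  ![(0,2,2,0,2,0),(0,2,2,0,1,0),(0,2,1,0,1,0),(0,2,0,0,2,0),
    (0,2,1,0,1,1),(0,2,1,0,1,-1),(0,2,0,0,1,1),(0,2,0,0,1,0)]

def keyProp (a b c d e f : ℤ) : Prop :=
  (e*e ≤ (2-d)*(2-f) ∧ e*e ≤ (2+d)*(2+f) ∧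
   c*c ≤ (2-a)*(2-f) ∧ c*c ≤ (2+a)*(2+f) ∧
   b*b ≤ (2-a)*(2-d) ∧ b*b ≤ (2+a)*(2+d)) →
  (¬ (0 ≤ 8 - 4*(a+d+f) + 2*((a*d-b*b)+(a*f-c*c)+(d*f-e*e))
        - (a*(d*f-e*e) - b*(b*f-e*c) + c*(b*e-d*c)) ∧
      0 ≤ 12 - 4*(a+d+f) + ((a*d-b*b)+(a*f-c*c)+(d*f-e*e)) ∧
      a+d+f ≤ 6 ∧
      -8 - 4*(a+d+f) - 2*((a*d-b*b)+(a*f-c*c)+(d*f-e*e))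
        - (a*(d*f-e*e) - b*(b*f-e*c) + c*(b*e-d*c)) ≤ 0 ∧
      0 ≤ 12 + 4*(a+d+f) + ((a*d-b*b)+(a*f-c*c)+(d*f-e*e)) ∧
      -6 ≤ a+d+f)) →
  (|a| = 2 ∨ |b| = 2 ∨ |c| = 2 ∨ |d| = 2 ∨ |e| = 2 ∨ |f| = 2) →
  ∃ (k : Fin 8) (εb s1 s2 : Bool) (p : Fin 6), Et k = tr εb s1 s2 p (a,b,c,d,e,f)

instance keyPropDec (a b c d e f : ℤ) : Decidable (keyProp a b c d e f) := by
  unfold keyProp; infer_instance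

def I5 : List ℤ := [-2,-1,0,1,2]

lemma mem_I5 {x : ℤ} (h : |x| ≤ 2) : x ∈ I5 := by
  have h' := abs_le.mp h
  simp only [I5, List.mem_cons, List.mem_singleton]
  omega

set_option maxHeartbeats 4000000 in
lemma key : ∀ a ∈ I5, ∀ b ∈ I5, ∀ c ∈ I5, ∀ d ∈ I5, ∀ e ∈ I5, ∀ f ∈ I5,
    keyProp a b c d e f := by decide

/-! ### Part 2 machinery -/

lemma coeff_intCast_ne (n : ℤ) (k : ℕ) (hk : k ≠ 0) : ((n : Polynomial ℤ)).coeff k = 0 := by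
  rw [← Polynomial.C_eq_intCast, Polynomial.coeff_C]; simp [hk]

def S6 (t s D : ℤ) : Polynomial ℤ :=
  X^6 - C t*X^5 + (C s + 3)*X^4 - (2*C t + C D)*X^3 + (C s + 3)*X^2 - C t*X + 1

lemma recip3 (t s D : ℤ) :
    recipPoly 3 (X^3 - C t*X^2 + C s*X - C D) = S6 t s D := by
  have c0 : (X^3 - C t*X^2 + C s*X - C D).coeff 0 = -D := by simp
  have c1 : (X^3 - C t*X^2 + C s*X - C D).coeff 1 = s := by simp [coeff_C, coeff_intCast_ne]
  have c2 : (X^3 - C t*X^2 + C s*X - C D).coeff 2 = -t := by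
    simp [coeff_X_pow, coeff_C, coeff_intCast_ne]
  have c3 : (X^3 - C t*X^2 + C s*X - C D).coeff 3 = 1 := by
    simp [coeff_X_pow, coeff_C, coeff_intCast_ne]
  unfold recipPoly S6
  rw [Finset.sum_range_succ, Finset.sum_range_succ, Finset.sum_range_succ, Finset.sum_range_one,
    c0, c1, c2, c3]
  simp only [map_neg, Polynomial.C_1]
  ring

lemma eval_S6R (t s D : ℤ) (x : ℝ) :
    ((S6 t s D).map (Int.castRingHom ℝ)).eval x
      = x^6 - t*x^5 + (3+s)*x^4 - (2*t+D)*x^3 + (3+s)*x^2 - t*x + 1 := by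
  simp [S6]; try push_cast; try ring

lemma eval_S6C (t s D : ℤ) (x : ℂ) :
    ((S6 t s D).map (Int.castRingHom ℂ)).eval x
      = x^6 - t*x^5 + (3+s)*x^4 - (2*t+D)*x^3 + (3+s)*x^2 - t*x + 1 := by
  simp [S6]; try push_cast; try ring

lemma S6C_ne (t s D : ℤ) : (S6 t s D).map (Int.castRingHom ℂ) ≠ 0 := by
  intro h
  have h1 := eval_S6C t s D 0
  rw [h] at h1; simp at h1

lemma S6R_ne (t s D : ℤ) : (S6 t s D).map (Int.castRingHom ℝ) ≠ 0 := by
  intro h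
  have h1 := eval_S6R t s D 0
  rw [h] at h1; simp at h1

lemma real_root_to_C {q : Polynomial ℤ} (hq : q.map (Int.castRingHom ℂ) ≠ 0) {r : ℝ}
    (h : (q.map (Int.castRingHom ℝ)).eval r = 0) :
    (r : ℂ) ∈ (q.map (Int.castRingHom ℂ)).roots := by
  rw [Polynomial.mem_roots']
  refine ⟨hq, ?_⟩
  have hc : Int.castRingHom ℂ = (Complex.ofRealHom).comp (Int.castRingHom ℝ) :=
    Subsingleton.elim _ _
  rw [IsRoot, hc, ← Polynomial.map_map, Polynomial.eval_map,
    show ((r:ℂ)) = Complex.ofRealHom r from rfl, Polynomial.eval₂_at_apply, h]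
  simp

lemma one_le_msprod (s : Multiset ℝ) (h : ∀ x ∈ s, (1:ℝ) ≤ x) : 1 ≤ s.prod := by
  induction s using Multiset.induction_on with
  | empty => simp
  | cons a t ih =>
    rw [Multiset.prod_cons]
    have ha := h a (Multiset.mem_cons_self a t)
    have ht := ih fun x hx => h x (Multiset.mem_cons_of_mem hx)
    nlinarith

lemma prod_lb1 (s : Multiset ℂ) {z : ℂ} (hz : z ∈ s) :
    max 1 (‖z‖) ≤ (s.map fun w => max 1 (‖w‖)).prod := by
  obtain ⟨u, rfl⟩ := Multiset.exists_cons_of_mem hz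
  rw [Multiset.map_cons, Multiset.prod_cons]
  have h1 : (1:ℝ) ≤ (u.map fun w => max 1 (‖w‖)).prod :=
    one_le_msprod _
      (by intro x hx; obtain ⟨w, _, rfl⟩ := Multiset.mem_map.1 hx; exact le_max_left _ _)
  nlinarith [le_max_left (1:ℝ) (‖z‖)]

lemma prod_lb2 (s : Multiset ℂ) {z w : ℂ} (hz : z ∈ s) (hw : w ∈ s) (hzw : z ≠ w) :
    max 1 (‖z‖) * max 1 (‖w‖)
      ≤ (s.map fun v => max 1 (‖v‖)).prod := by
  obtain ⟨u, rfl⟩ := Multiset.exists_cons_of_mem hz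
  have hw' : w ∈ u := by
    rcases Multiset.mem_cons.1 hw with h | h
    · exact absurd h.symm hzw
    · exact h
  obtain ⟨v, rfl⟩ := Multiset.exists_cons_of_mem hw'
  rw [Multiset.map_cons, Multiset.map_cons, Multiset.prod_cons, Multiset.prod_cons]
  have h1 : (1:ℝ) ≤ (v.map fun w => max 1 (‖w‖)).prod :=
    one_le_msprod _
      (by intro x hx; obtain ⟨y, _, rfl⟩ := Multiset.mem_map.1 hx; exact le_max_left _ _)
  have hA : (1:ℝ) ≤ max 1 (‖z‖) := le_max_left _ _
  have hB : (1:ℝ) ≤ max 1 (‖w‖) := le_max_left _ _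
  nlinarith [mul_nonneg (mul_nonneg (by linarith : (0:ℝ) ≤ max 1 (‖z‖))
    (by linarith : (0:ℝ) ≤ max 1 (‖w‖)))
    (by linarith : (0:ℝ) ≤ (Multiset.map (fun v => max 1 (‖v‖)) v).prod - 1)]

lemma cubic_ne (t s D : ℤ) :
    ((X^3 - C t*X^2 + C s*X - C D : Polynomial ℤ).map (Int.castRingHom ℝ)) ≠ 0 := by
  intro h
  have e0 := eval_map3 t s D 0
  have e1 := eval_map3 t s D 1
  have e2 := eval_map3 t s D (-1)
  have e3 := eval_map3 t s D 2
  rw [h] at e0 e1 e2 e3; norm_num at e0 e1 e2 e3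
  have e0' : (D:ℝ) = 0 := by exact_mod_cast e0
  linarith

lemma specRad_lb3 {A : Matrix (Fin 3) (Fin 3) ℤ} {t s D : ℤ}
    (hcp : A.charpoly = X^3 - C t*X^2 + C s*X - C D) {a b : ℝ}
    (hab : a ≤ b) (ha0 : 0 ≤ a) (h5 : 5 ≤ a^2)
    (hva : a^3 - t*a^2 + s*a - D ≤ 0) (hvb : 0 ≤ b^3 - t*b^2 + s*b - D) :
    Real.sqrt 5 ≤ specRad A := by
  have hne : (A.charpoly.map (Int.castRingHom ℝ)) ≠ 0 := by rw [hcp]; exact cubic_ne t s D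
  obtain ⟨r, hr, hroot⟩ := exists_root_Icc hne hab
    (by rw [hcp, eval_map3]; exact hva) (by rw [hcp, eval_map3]; exact hvb)
  calc Real.sqrt 5 ≤ Real.sqrt (a^2) := Real.sqrt_le_sqrt h5
    _ = a := Real.sqrt_sq ha0
    _ ≤ r := hr.1
    _ ≤ |r| := le_abs_self r
    _ ≤ specRad A := abs_le_specRad hroot

lemma mahler_ge_root {A : Matrix (Fin 3) (Fin 3) ℤ} {t s D : ℤ}
    (hcp : A.charpoly = X^3 - C t*X^2 + C s*X - C D) {a b : ℝ}
    (hab : a ≤ b) (h1a : 1 ≤ a)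
    (hva : ((S6 t s D).map (Int.castRingHom ℝ)).eval a ≤ 0)
    (hvb : 0 ≤ ((S6 t s D).map (Int.castRingHom ℝ)).eval b) :
    a ≤ mahlerMeasure A := by
  obtain ⟨r, hr, hroot⟩ := exists_root_Icc (S6R_ne t s D) hab hva hvb
  have hr0 : ((S6 t s D).map (Int.castRingHom ℝ)).eval r = 0 :=
    (Polynomial.mem_roots'.1 hroot).2
  have hC : ((r:ℂ)) ∈ ((recipPoly 3 A.charpoly).map (Int.castRingHom ℂ)).roots := by
    rw [hcp, recip3]; exact real_root_to_C (S6C_ne t s D) hr0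
  have hprod := prod_lb1 _ hC
  unfold _root_.mahlerMeasure
  have habs : ‖(r:ℂ)‖ = r := by
    rw [Complex.norm_real, Real.norm_eq_abs]; exact abs_of_nonneg (by linarith [hr.1])
  calc a ≤ r := hr.1
    _ ≤ max 1 (‖(r:ℂ)‖) := by rw [habs]; exact le_max_right _ _
    _ ≤ _ := hprod

end Aux

set_option maxHeartbeats 2000000 in
/-- every 3×3 minimal noncyclotomic integer symmetric matrix with entries
of absolute value at most 2, some entry of absolute value exactly 2, is equivalent to one
of eight matrices; each of those has spectral radius at least `√5` and Mahler measure
greater than `2.081`. -/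
theorem statement12 :
    (∀ A : Matrix (Fin 3) (Fin 3) ℤ, A.IsSymm → MinimalNoncyclotomic A →
      (∀ i j, |A i j| ≤ 2) → (∃ i j, |A i j| = 2) →
      (MEquiv A E1 ∨ MEquiv A E2 ∨ MEquiv A E3 ∨ MEquiv A E4 ∨
       MEquiv A E5 ∨ MEquiv A E6 ∨ MEquiv A E7 ∨ MEquiv A E8)) ∧
    (∀ M ∈ [E1, E2, E3, E4, E5, E6, E7, E8],
      Real.sqrt 5 ≤ specRad M ∧ (2.081 : ℝ) < mahlerMeasure M) := by
  constructor
  · -- Part 1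
    intro A hsym hmin hbd hex
    have hA := symm_matOf hsym
    set a := A 0 0 with ha'
    set b := A 0 1 with hb'
    set c := A 0 2 with hc'
    set d := A 1 1 with hd'
    set e := A 1 2 with he'
    set f := A 2 2 with hf'
    have hba : |a| ≤ 2 := hbd 0 0
    have hbb : |b| ≤ 2 := hbd 0 1
    have hbc : |c| ≤ 2 := hbd 0 2
    have hbdd : |d| ≤ 2 := hbd 1 1
    have hbe : |e| ≤ 2 := hbd 1 2
    have hbf : |f| ≤ 2 := hbd 2 2
    rw [hA] at hmin hex ⊢
    -- minor conditions
    have hm0 := hmin.2 0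
    have hm1 := hmin.2 1
    have hm2 := hmin.2 2
    rw [deleteRC0] at hm0
    rw [deleteRC1] at hm1
    rw [deleteRC2] at hm2
    have q0 := minor_cond hbdd hbe hbf hm0
    have q1 := minor_cond hba hbc hbf hm1
    have q2 := minor_cond hba hbb hbdd hm2
    -- noncyclotomic condition
    have hN : ¬ (0 ≤ 8 - 4*(a+d+f) + 2*((a*d-b*b)+(a*f-c*c)+(d*f-e*e))
        - (a*(d*f-e*e) - b*(b*f-e*c) + c*(b*e-d*c)) ∧
      0 ≤ 12 - 4*(a+d+f) + ((a*d-b*b)+(a*f-c*c)+(d*f-e*e)) ∧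
      a+d+f ≤ 6 ∧
      -8 - 4*(a+d+f) - 2*((a*d-b*b)+(a*f-c*c)+(d*f-e*e))
        - (a*(d*f-e*e) - b*(b*f-e*c) + c*(b*e-d*c)) ≤ 0 ∧
      0 ≤ 12 + 4*(a+d+f) + ((a*d-b*b)+(a*f-c*c)+(d*f-e*e)) ∧
      -6 ≤ a+d+f) := by
      rintro ⟨n1, n2, n3, n4, n5, n6⟩
      exact absurd (cubic_cyclo (charpoly3 a b c d e f) n1 n2 n3 n4 n5 n6)
        (not_le.2 hmin.1)
    -- entry of absolute value 2
    have hmax : |a| = 2 ∨ |b| = 2 ∨ |c| = 2 ∨ |d| = 2 ∨ |e| = 2 ∨ |f| = 2 := by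
      obtain ⟨i, j, hij⟩ := hex
      fin_cases i <;> fin_cases j <;> simp [matOf] at hij <;> tauto
    have kp := key a (mem_I5 hba) b (mem_I5 hbb) c (mem_I5 hbc) d (mem_I5 hbdd)
      e (mem_I5 hbe) f (mem_I5 hbf)
      ⟨q0.1, q0.2, q1.1, q1.2, q2.1, q2.2⟩ hN hmax
    obtain ⟨k, εb, s1, s2, p, hk⟩ := kp
    have hEq : MEquiv (mtOf (a,b,c,d,e,f)) (mtOf (Et k)) := by
      rw [hk]; exact bridge εb s1 s2 p (a,b,c,d,e,f)
    fin_cases k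
    · exact Or.inl hEq
    · exact Or.inr (Or.inl hEq)
    · exact Or.inr (Or.inr (Or.inl hEq))
    · exact Or.inr (Or.inr (Or.inr (Or.inl hEq)))
    · exact Or.inr (Or.inr (Or.inr (Or.inr (Or.inl hEq))))
    · exact Or.inr (Or.inr (Or.inr (Or.inr (Or.inr (Or.inl hEq)))))
    · exact Or.inr (Or.inr (Or.inr (Or.inr (Or.inr (Or.inr (Or.inl hEq))))))
    · exact Or.inr (Or.inr (Or.inr (Or.inr (Or.inr (Or.inr (Or.inr hEq))))))
  · -- Part 2
    intro M hM
    have cp1 : E1.charpoly = X^3 - C 0*X^2 + C (-12)*X - C 16 := by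
      rw [show E1 = matOf 0 2 2 0 2 0 from rfl, charpoly3]; norm_num
    have cp2 : E2.charpoly = X^3 - C 0*X^2 + C (-9)*X - C 8 := by
      rw [show E2 = matOf 0 2 2 0 1 0 from rfl, charpoly3]; norm_num
    have cp3 : E3.charpoly = X^3 - C 0*X^2 + C (-6)*X - C 4 := by
      rw [show E3 = matOf 0 2 1 0 1 0 from rfl, charpoly3]; norm_num
    have cp4 : E4.charpoly = X^3 - C 0*X^2 + C (-8)*X - C 0 := by
      rw [show E4 = matOf 0 2 0 0 2 0 from rfl, charpoly3]; norm_num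
    have cp5 : E5.charpoly = X^3 - C 1*X^2 + C (-6)*X - C 0 := by
      rw [show E5 = matOf 0 2 1 0 1 1 from rfl, charpoly3]; norm_num
    have cp6 : E6.charpoly = X^3 - C (-1)*X^2 + C (-6)*X - C 8 := by
      rw [show E6 = matOf 0 2 1 0 1 (-1) from rfl, charpoly3]; norm_num
    have cp7 : E7.charpoly = X^3 - C 1*X^2 + C (-5)*X - C (-4) := by
      rw [show E7 = matOf 0 2 0 0 1 1 from rfl, charpoly3]; norm_num
    have cp8 : E8.charpoly = X^3 - C 0*X^2 + C (-5)*X - C 0 := by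
      rw [show E8 = matOf 0 2 0 0 1 0 from rfl, charpoly3]; norm_num
    fin_cases hM
    · constructor
      · exact specRad_lb3 cp1 (by norm_num : (3:ℝ) ≤ 5) (by norm_num) (by norm_num)
          (by norm_num) (by norm_num)
      · have h := mahler_ge_root cp1 (by norm_num : (3.7:ℝ) ≤ 3.8) (by norm_num)
          (by rw [eval_S6R]; norm_num) (by rw [eval_S6R]; norm_num)
        linarith
    · constructor
      · exact specRad_lb3 cp2 (by norm_num : (3:ℝ) ≤ 4) (by norm_num) (by norm_num)
          (by norm_num) (by norm_num)
      · have h := mahler_ge_root cp2 (by norm_num : (3:ℝ) ≤ 3.1) (by norm_num)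
          (by rw [eval_S6R]; norm_num) (by rw [eval_S6R]; norm_num)
        linarith
    · constructor
      · exact specRad_lb3 cp3 (by norm_num : (2.5:ℝ) ≤ 3) (by norm_num) (by norm_num)
          (by norm_num) (by norm_num)
      · have h := mahler_ge_root cp3 (by norm_num : (2.2:ℝ) ≤ 2.3) (by norm_num)
          (by rw [eval_S6R]; norm_num) (by rw [eval_S6R]; norm_num)
        linarith
    · constructor
      · exact specRad_lb3 cp4 (by norm_num : (2.5:ℝ) ≤ 3) (by norm_num) (by norm_num)
          (by norm_num) (by norm_num)
      · have h := mahler_ge_root cp4 (by norm_num : (2.4:ℝ) ≤ 2.5) (by norm_num)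
          (by rw [eval_S6R]; norm_num) (by rw [eval_S6R]; norm_num)
        linarith
    · constructor
      · exact specRad_lb3 cp5 (by norm_num : (2.5:ℝ) ≤ 4) (by norm_num) (by norm_num)
          (by norm_num) (by norm_num)
      · have h := mahler_ge_root cp5 (by norm_num : (2.6:ℝ) ≤ 2.7) (by norm_num)
          (by rw [eval_S6R]; norm_num) (by rw [eval_S6R]; norm_num)
        linarith
    · constructor
      · exact specRad_lb3 cp6 (by norm_num : (2.5:ℝ) ≤ 3) (by norm_num) (by norm_num)
          (by norm_num) (by norm_num)
      · have h := mahler_ge_root cp6 (by norm_num : (2.08101:ℝ) ≤ 2.1) (by norm_num)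
          (by rw [eval_S6R]; norm_num) (by rw [eval_S6R]; norm_num)
        linarith
    · constructor
      · exact specRad_lb3 cp7 (by norm_num : (2.25:ℝ) ≤ 3) (by norm_num) (by norm_num)
          (by norm_num) (by norm_num)
      · -- E7 : two real roots
        obtain ⟨r1, hr1, hroot1⟩ := exists_root_Icc (S6R_ne 1 (-5) (-4))
          (by norm_num : (1.8:ℝ) ≤ 1.9) (by rw [eval_S6R]; norm_num) (by rw [eval_S6R]; norm_num)
        obtain ⟨r2, hr2, hroot2⟩ := exists_root_Icc' (S6R_ne 1 (-5) (-4))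
          (by norm_num : (-1.5:ℝ) ≤ -1.4) (by rw [eval_S6R]; norm_num) (by rw [eval_S6R]; norm_num)
        have h1 : ((S6 1 (-5) (-4)).map (Int.castRingHom ℝ)).eval r1 = 0 :=
          (Polynomial.mem_roots'.1 hroot1).2
        have h2 : ((S6 1 (-5) (-4)).map (Int.castRingHom ℝ)).eval r2 = 0 :=
          (Polynomial.mem_roots'.1 hroot2).2
        have hC1 : ((r1:ℂ)) ∈ ((recipPoly 3 E7.charpoly).map (Int.castRingHom ℂ)).roots := by
          rw [cp7, recip3]; exact real_root_to_C (S6C_ne 1 (-5) (-4)) h1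
        have hC2 : ((r2:ℂ)) ∈ ((recipPoly 3 E7.charpoly).map (Int.castRingHom ℂ)).roots := by
          rw [cp7, recip3]; exact real_root_to_C (S6C_ne 1 (-5) (-4)) h2
        have hne : ((r1:ℂ)) ≠ ((r2:ℂ)) := by
          intro h
          have := Complex.ofReal_inj.1 h
          have := hr1.1; have := hr2.2
          linarith
        have hprod := prod_lb2 _ hC1 hC2 hne
        unfold _root_.mahlerMeasure
        have ha1 : ‖(r1:ℂ)‖ = r1 := by
          rw [Complex.norm_real, Real.norm_eq_abs]; exact abs_of_nonneg (by linarith [hr1.1])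
        have ha2 : ‖(r2:ℂ)‖ = -r2 := by
          rw [Complex.norm_real, Real.norm_eq_abs]; exact abs_of_nonpos (by linarith [hr2.2])
        have m1 : (1.8:ℝ) ≤ max 1 (‖(r1:ℂ)‖) := by
          rw [ha1]; exact le_trans hr1.1 (le_max_right _ _)
        have m2 : (1.4:ℝ) ≤ max 1 (‖(r2:ℂ)‖) := by
          rw [ha2]; refine le_trans ?_ (le_max_right _ _); linarith [hr2.2]
        have hm1' : (1:ℝ) ≤ max 1 (‖(r1:ℂ)‖) := le_max_left _ _
        have hm2' : (1:ℝ) ≤ max 1 (‖(r2:ℂ)‖) := le_max_left _ _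
        nlinarith [hprod]
    · constructor
      · -- E8 : sqrt 5 is exactly an eigenvalue
        have hne : (E8.charpoly.map (Int.castRingHom ℝ)) ≠ 0 := by
          rw [cp8]; exact cubic_ne 0 (-5) 0
        have h5 : Real.sqrt 5 ^ 2 = 5 := Real.sq_sqrt (by norm_num)
        have hroot : Real.sqrt 5 ∈ (E8.charpoly.map (Int.castRingHom ℝ)).roots := by
          rw [Polynomial.mem_roots']
          refine ⟨hne, ?_⟩
          rw [IsRoot, cp8, eval_map3]
          push_cast
          linear_combination (Real.sqrt 5) * h5
        have := abs_le_specRad hroot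
        rwa [abs_of_nonneg (Real.sqrt_nonneg 5)] at this
      · -- E8 : two roots ±r
        obtain ⟨r, hr, hroot⟩ := exists_root_Icc (S6R_ne 0 (-5) 0)
          (by norm_num : (1.6:ℝ) ≤ 1.7) (by rw [eval_S6R]; norm_num) (by rw [eval_S6R]; norm_num)
        have h1 : ((S6 0 (-5) 0).map (Int.castRingHom ℝ)).eval r = 0 :=
          (Polynomial.mem_roots'.1 hroot).2
        have h1' : r^6 - 2*r^4 - 2*r^2 + 1 = 0 := by
          rw [eval_S6R] at h1; push_cast at h1; linarith [h1]
        have h2 : ((S6 0 (-5) 0).map (Int.castRingHom ℝ)).eval (-r) = 0 := by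
          rw [eval_S6R]; push_cast; linear_combination h1'
        have hC1 : ((r:ℂ)) ∈ ((recipPoly 3 E8.charpoly).map (Int.castRingHom ℂ)).roots := by
          rw [cp8, recip3]; exact real_root_to_C (S6C_ne 0 (-5) 0) h1
        have hC2 : (((-r:ℝ):ℂ)) ∈ ((recipPoly 3 E8.charpoly).map (Int.castRingHom ℂ)).roots := by
          rw [cp8, recip3]; exact real_root_to_C (S6C_ne 0 (-5) 0) h2
        have hne2 : ((r:ℂ)) ≠ (((-r:ℝ):ℂ)) := by
          intro h
          have := Complex.ofReal_inj.1 h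
          have := hr.1
          linarith
        have hprod := prod_lb2 _ hC1 hC2 hne2
        unfold _root_.mahlerMeasure
        have ha1 : ‖(r:ℂ)‖ = r := by
          rw [Complex.norm_real, Real.norm_eq_abs]; exact abs_of_nonneg (by linarith [hr.1])
        have ha2 : ‖(((-r:ℝ)):ℂ)‖ = r := by
          rw [Complex.norm_real, Real.norm_eq_abs]; rw [abs_neg]; exact abs_of_nonneg (by linarith [hr.1])
        have m1 : (1.6:ℝ) ≤ max 1 (‖(r:ℂ)‖) := by
          rw [ha1]; exact le_trans hr.1 (le_max_right _ _)
        have m2 : (1.6:ℝ) ≤ max 1 (‖(((-r:ℝ)):ℂ)‖) := by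
          rw [ha2]; exact le_trans hr.1 (le_max_right _ _)
        have hm1' : (1:ℝ) ≤ max 1 (‖(r:ℂ)‖) := le_max_left _ _
        have hm2' : (1:ℝ) ≤ max 1 (‖(((-r:ℝ)):ℂ)‖) := le_max_left _ _
        nlinarith [hprod]


end
end

section
/- If A = (a_{ij}) is a minimal noncyclotomic integer symmetric matrix with all entries in {−1,0,1} and with at least 7 rows, then every vertex of the associated charged signed graph has degree at most 4; that is, for every index i, the number of indices j ≠ i with a_{ij} ≠ 0, plus 1 if a_{ii} ≠ 0, is at most 4. -/
open Polynomial Matrix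

noncomputable section

lemma aux_eval_charpoly {n : ℕ} (M : Matrix (Fin n) (Fin n) ℝ) (t : ℝ) :
    M.charpoly.eval t = (Matrix.diagonal (fun _ => t) - M).det := by
  rw [Matrix.charpoly, ← coe_evalRingHom, RingHom.map_det]
  congr 1
  ext i j
  by_cases h : i = j
  · subst h; simp [charmatrix_apply_eq]
  · simp [charmatrix_apply_ne _ _ _ h, Matrix.diagonal_apply_ne _ h]

lemma aux_abs_root_le {n : ℕ} (B : Matrix (Fin n) (Fin n) ℤ) (hs : specRad B ≤ 2)
    {x : ℝ} (hx : x ∈ (B.charpoly.map (Int.castRingHom ℝ)).roots) : |x| ≤ 2 := by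
  have hmem : |x| ∈ {r : ℝ | ∃ y ∈ (B.charpoly.map (Int.castRingHom ℝ)).roots, |y| = r} :=
    ⟨x, hx, rfl⟩
  have hbdd : BddAbove {r : ℝ | ∃ y ∈ (B.charpoly.map (Int.castRingHom ℝ)).roots, |y| = r} := by
    have heq : {r : ℝ | ∃ y ∈ (B.charpoly.map (Int.castRingHom ℝ)).roots, |y| = r}
        = (fun y => |y|) '' {y | y ∈ (B.charpoly.map (Int.castRingHom ℝ)).roots} := by
      ext r; simp [Set.mem_image]
    rw [heq]
    apply Set.Finite.bddAbove
    apply Set.Finite.image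
    have hsub : {y | y ∈ (B.charpoly.map (Int.castRingHom ℝ)).roots}
        ⊆ ((B.charpoly.map (Int.castRingHom ℝ)).roots.toFinset : Set ℝ) := by
      intro y hy; simpa [Multiset.mem_toFinset] using hy
    exact Set.Finite.subset (Finset.finite_toSet _) hsub
  exact le_trans (le_csSup hbdd hmem) hs

lemma aux_row_le {n : ℕ} (B : Matrix (Fin n) (Fin n) ℤ) (hsym : B.IsSymm)
    (hs : specRad B ≤ 2) (i0 : Fin n) : (∑ k, (B i0 k) ^ 2 : ℤ) ≤ 4 := by
  set B' : Matrix (Fin n) (Fin n) ℝ := B.map (Int.castRingHom ℝ) with hB'def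
  have hsym' : B'.IsSymm := by
    rw [Matrix.IsSymm, hB'def, ← Matrix.transpose_map, hsym]
  have hB : B'.IsHermitian := by
    rw [Matrix.IsHermitian, Matrix.conjTranspose_eq_transpose_of_trivial]; exact hsym'
  set μ := hB.eigenvalues with hμ
  -- each eigenvalue has absolute value at most 2
  have habs : ∀ k, |μ k| ≤ 2 := by
    intro k
    apply aux_abs_root_le B hs
    have hspec := hB.eigenvalues_mem_spectrum_real k
    rw [spectrum.mem_iff] at hspec
    have halg : algebraMap ℝ (Matrix (Fin n) (Fin n) ℝ) (μ k)
        = Matrix.diagonal (fun _ : Fin n => μ k) := by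
      rw [Matrix.algebraMap_eq_diagonal]
      congr 1
    have hdet : (Matrix.diagonal (fun _ : Fin n => μ k) - B').det = 0 := by
      by_contra hne
      apply hspec
      rw [halg]
      exact (Matrix.isUnit_iff_isUnit_det _).mpr (isUnit_iff_ne_zero.mpr hne)
    rw [← Matrix.charpoly_map]
    refine Polynomial.mem_roots'.mpr ⟨(Matrix.charpoly_monic _).ne_zero, ?_⟩
    rw [Polynomial.IsRoot, aux_eval_charpoly, hdet]
  -- spectral theorem computation
  set V : Matrix (Fin n) (Fin n) ℝ := (hB.eigenvectorUnitary : Matrix (Fin n) (Fin n) ℝ) with hV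
  have hVsV : star V * V = 1 := Matrix.mem_unitaryGroup_iff'.mp hB.eigenvectorUnitary.2
  have hVVs : V * star V = 1 := Matrix.mem_unitaryGroup_iff.mp hB.eigenvectorUnitary.2
  have hD : Matrix.diagonal (RCLike.ofReal ∘ μ) = Matrix.diagonal μ := by
    congr 1
  have hsp : B' = V * Matrix.diagonal μ * star V := by
    rw [← hD]; exact hB.spectral_theorem
  have hsq : B' * B' = V * Matrix.diagonal (fun k => μ k ^ 2) * star V := by
    rw [hsp]
    simp only [Matrix.mul_assoc]
    rw [← Matrix.mul_assoc (star V) V, hVsV, Matrix.one_mul,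
      ← Matrix.mul_assoc (Matrix.diagonal μ) (Matrix.diagonal μ), Matrix.diagonal_mul_diagonal]
    congr 2
    ext k
    ring
  -- entry (i0, i0)
  have hentry : ∀ w : Fin n → ℝ, (V * Matrix.diagonal w * star V) i0 i0
      = ∑ k, w k * (V i0 k) ^ 2 := by
    intro w
    rw [Matrix.mul_apply]
    apply Finset.sum_congr rfl
    intro k _
    rw [Matrix.mul_diagonal, Matrix.star_eq_conjTranspose, Matrix.conjTranspose_apply,
      star_trivial]
    ring
  have hVone : ∑ k, (V i0 k) ^ 2 = 1 := by
    have h1 : (V * star V) i0 i0 = 1 := by rw [hVVs]; simp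
    rw [Matrix.mul_apply] at h1
    rw [← h1]
    apply Finset.sum_congr rfl
    intro k _
    rw [Matrix.star_eq_conjTranspose, Matrix.conjTranspose_apply, star_trivial]
    ring
  have hBB : (B' * B') i0 i0 = ∑ k, (B' i0 k) ^ 2 := by
    rw [Matrix.mul_apply]
    apply Finset.sum_congr rfl
    intro k _
    have : B' k i0 = B' i0 k := by
      conv_lhs => rw [← hsym']
      rfl
    rw [this]; ring
  have hle : ∑ k, (B' i0 k) ^ 2 ≤ 4 := by
    rw [← hBB, hsq, hentry]
    calc ∑ k, μ k ^ 2 * (V i0 k) ^ 2 ≤ ∑ k, 4 * (V i0 k) ^ 2 := by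
          apply Finset.sum_le_sum
          intro k _
          apply mul_le_mul_of_nonneg_right _ (sq_nonneg _)
          have := habs k
          calc μ k ^ 2 = |μ k| ^ 2 := (sq_abs _).symm
            _ ≤ 2 ^ 2 := by
                apply pow_le_pow_left₀ (abs_nonneg _) this
            _ = 4 := by norm_num
      _ = 4 := by rw [← Finset.mul_sum, hVone, mul_one]
  have hc : ((∑ k, (B i0 k) ^ 2 : ℤ) : ℝ) = ∑ k, (B' i0 k) ^ 2 := by
    push_cast
    rfl
  have : ((∑ k, (B i0 k) ^ 2 : ℤ) : ℝ) ≤ 4 := by rw [hc]; exact hle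
  exact_mod_cast this


/-- a minimal noncyclotomic charged signed graph with at least 7 vertices
has all vertex degrees at most 4 (a charge counts 1 towards the degree). -/
theorem statement13 (d : ℕ) (A : Matrix (Fin d) (Fin d) ℤ) (hA : A.IsSymm)
    (hent : ∀ i j, A i j = -1 ∨ A i j = 0 ∨ A i j = 1)
    (hmin : MinimalNoncyclotomic A) (hd : 7 ≤ d) :
    ∀ i : Fin d,
      (Finset.univ.filter (fun j => j ≠ i ∧ A i j ≠ 0)).card
        + (if A i i ≠ 0 then 1 else 0) ≤ 4 := by
  intro i
  by_contra hcon
  push_neg at hcon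
  set N := (Finset.univ.filter (fun j => j ≠ i ∧ A i j ≠ 0)).card with hNdef
  have hsq : ∀ k l, (A k l) ^ 2 = if A k l ≠ 0 then (1 : ℤ) else 0 := by
    intro k l; rcases hent k l with h | h | h <;> simp [h]
  have htotal : (∑ k, (A i k) ^ 2 : ℤ) = (N : ℤ) + (if A i i ≠ 0 then 1 else 0) := by
    rw [← Finset.add_sum_erase _ _ (Finset.mem_univ i), add_comm]
    congr 1
    · rw [Finset.sum_congr rfl (fun k _ => hsq i k), Finset.sum_boole]
      congr 2
      ext k
      simp only [Finset.mem_filter, Finset.mem_erase, Finset.mem_univ, true_and, and_comm,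
        hNdef]
    · exact hsq i i
  have hcon' : (5 : ℤ) ≤ (N : ℤ) + (if A i i ≠ 0 then 1 else 0) := by
    split_ifs with hii <;> simp [hii] at hcon <;> push_cast <;> omega
  have h5 : (5 : ℤ) ≤ ∑ k, (A i k) ^ 2 := by rw [htotal]; exact hcon'
  obtain ⟨j, hji, hj5⟩ : ∃ j : Fin d, j ≠ i ∧ (5 : ℤ) + (A i j) ^ 2 ≤ ∑ k, (A i k) ^ 2 := by
    by_cases hex : ∃ j : Fin d, j ≠ i ∧ A i j = 0
    · obtain ⟨j, hji, hj0⟩ := hex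
      exact ⟨j, hji, by rw [hj0]; simpa using h5⟩
    · push_neg at hex
      have hNall : Finset.univ.filter (fun j => j ≠ i ∧ A i j ≠ 0) = Finset.univ.erase i := by
        ext k
        simp only [Finset.mem_filter, Finset.mem_erase, Finset.mem_univ, true_and, and_true,
          iff_iff_implies_and_implies]
        exact ⟨fun h => h.1, fun h => ⟨h, hex k h⟩⟩
      have hN : N = d - 1 := by
        rw [hNdef, hNall, Finset.card_erase_of_mem (Finset.mem_univ i), Finset.card_univ,
          Fintype.card_fin]
      have hd1 : (1 : ℕ) ≤ d := by omega
      have h6 : (6 : ℤ) ≤ ∑ k, (A i k) ^ 2 := by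
        rw [htotal, hN]
        have : (6 : ℤ) ≤ ((d - 1 : ℕ) : ℤ) := by
          push_cast [Nat.cast_sub hd1]; omega
        split_ifs <;> omega
      obtain ⟨j, hji⟩ : ∃ j : Fin d, j ≠ i := by
        have hcard : 1 < Fintype.card (Fin d) := by simp; omega
        exact Fintype.exists_ne_of_one_lt_card hcard i
      refine ⟨j, hji, ?_⟩
      have hle1 : (A i j) ^ 2 ≤ 1 := by rcases hent i j with h | h | h <;> simp [h]
      linarith
  -- deletion of vertex j
  have h1 : d - 1 + 1 = d := Nat.succ_pred_eq_of_pos j.pos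
  set f : Fin (d - 1) → Fin d :=
    fun k => Fin.cast h1 ((Fin.cast h1.symm j).succAbove k) with hfdef
  have hdel : deleteRC A j = A.submatrix f f := rfl
  have hne : Fin.cast h1.symm i ≠ Fin.cast h1.symm j := by
    intro he
    apply hji
    have := congrArg (Fin.cast h1) he
    simpa using this.symm
  obtain ⟨i1, hi1⟩ := Fin.exists_succAbove_eq hne
  have hfi1 : f i1 = i := by rw [hfdef]; simp [hi1]
  have hsum : ∑ k, (A i (f k)) ^ 2 = (∑ k, (A i k) ^ 2) - (A i j) ^ 2 := by
    have hsplit := Fin.sum_univ_succAbove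
      (fun k : Fin (d - 1 + 1) => (A i (Fin.cast h1 k)) ^ 2) (Fin.cast h1.symm j)
    have hall : ∑ k : Fin (d - 1 + 1), (A i (Fin.cast h1 k)) ^ 2 = ∑ k, (A i k) ^ 2 :=
      Fintype.sum_equiv (finCongr h1) _ _ (fun k => rfl)
    have hjj : (A i (Fin.cast h1 (Fin.cast h1.symm j))) ^ 2 = (A i j) ^ 2 := by simp
    rw [hall, hjj] at hsplit
    have hbeta : ∑ k, (A i (f k)) ^ 2
        = ∑ k : Fin (d - 1), (A i (Fin.cast h1 ((Fin.cast h1.symm j).succAbove k))) ^ 2 := rfl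
    rw [hbeta]
    omega
  have hrow : (5 : ℤ) ≤ ∑ k, ((deleteRC A j) i1 k) ^ 2 := by
    have hentry : ∀ k, (deleteRC A j) i1 k = A i (f k) := by
      intro k; rw [hdel, Matrix.submatrix_apply, hfi1]
    calc (5 : ℤ) ≤ ∑ k, (A i (f k)) ^ 2 := by rw [hsum]; linarith
      _ = ∑ k, ((deleteRC A j) i1 k) ^ 2 := by
          exact (Finset.sum_congr rfl (fun k _ => by rw [hentry k])).symm
  have hsymB : (deleteRC A j).IsSymm := by
    rw [hdel]
    rw [Matrix.IsSymm]
    ext a b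
    rw [Matrix.transpose_apply, Matrix.submatrix_apply, Matrix.submatrix_apply]
    exact hA.apply (f a) (f b)
  have := aux_row_le _ hsymB (hmin.2 j) i1
  linarith


end
end
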